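/- arXiv:2211.03166 — 6 statements merged into one kernel-verified Lean document; each statement's English description precedes it below -/
import Mathlib

section
/- Let p be a prime with p ≡ 1 (mod 8) and let α be a positive integer. Then the number of cliques of order 3 (triangles) in the Peisert-like graph G*(p^α) equals p^{3α−2}(p−1)(p−5)/48. -/
open Finset

-- graph defs
def peisertSet (n : ℕ) (g : (ZMod n)ˣ) : Set (ZMod n) :=
  {z | ∃ k : ℤ, z = ((g ^ (4 * k) : (ZMod n)ˣ) : ZMod n) ∨ z = ((g * g ^ (4 * k) : (ZMod n)ˣ) : ZMod n)}

def peisertGraph (n : ℕ) (g : (ZMod n)ˣ) : SimpleGraph (ZMod n) :=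
  SimpleGraph.fromRel (fun x y => x - y ∈ peisertSet n g)

noncomputable instance (n : ℕ) (g : (ZMod n)ˣ) : DecidableRel (peisertGraph n g).Adj :=
  Classical.decRel _

set_option linter.unusedSectionVars false
set_option maxHeartbeats 1000000

noncomputable section PeisertAux

variable {q : ℕ} [NeZero q] (g : (ZMod q)ˣ)

instance : DecidablePred (IsUnit : ZMod q → Prop) :=
  fun x => decidable_of_iff (∃ u : (ZMod q)ˣ, (u : ZMod q) = x) Iff.rfl

open scoped Classical in
/-- discrete-log-mod-4 class map -/
def cls (u : (ZMod q)ˣ) : ZMod 4 :=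
  if h : ∃ k : ℤ, g ^ k = u then ((h.choose : ℤ) : ZMod 4) else 0

lemma cls_zpow (h4 : (4:ℕ) ∣ orderOf g) (k : ℤ) : cls g (g ^ k) = (k : ZMod 4) := by
  have h : ∃ k' : ℤ, g ^ k' = g ^ k := ⟨k, rfl⟩
  rw [cls, dif_pos h]
  have hk' : g ^ h.choose = g ^ k := h.choose_spec
  have h1 : g ^ (h.choose - k) = 1 := by
    rw [zpow_sub, hk', mul_inv_cancel]
  have hdvd : (orderOf g : ℤ) ∣ (h.choose - k) := orderOf_dvd_iff_zpow_eq_one.2 h1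
  have h4' : (4:ℤ) ∣ (h.choose - k) :=
    dvd_trans (by exact_mod_cast Int.natCast_dvd_natCast.2 h4) hdvd
  have h0 := (ZMod.intCast_zmod_eq_zero_iff_dvd (h.choose - k) 4).2 (by exact_mod_cast h4')
  push_cast at h0
  linear_combination h0

lemma cls_mul (hg : ∀ u : (ZMod q)ˣ, u ∈ Subgroup.zpowers g) (h4 : (4:ℕ) ∣ orderOf g)
    (u v : (ZMod q)ˣ) : cls g (u * v) = cls g u + cls g v := by
  obtain ⟨k, hk⟩ := hg u
  obtain ⟨l, hl⟩ := hg v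
  subst hk; subst hl
  rw [← zpow_add, cls_zpow g h4, cls_zpow g h4, cls_zpow g h4]
  push_cast; ring

lemma cls_inv (hg : ∀ u : (ZMod q)ˣ, u ∈ Subgroup.zpowers g) (h4 : (4:ℕ) ∣ orderOf g)
    (u : (ZMod q)ˣ) : cls g u⁻¹ = - cls g u := by
  obtain ⟨k, hk⟩ := hg u
  subst hk
  rw [← zpow_neg, cls_zpow g h4, cls_zpow g h4]; push_cast; ring

lemma cls_self (h4 : (4:ℕ) ∣ orderOf g) : cls g g = 1 := by
  have := cls_zpow g h4 1
  simpa using this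

lemma cls_one (h4 : (4:ℕ) ∣ orderOf g) : cls g 1 = 0 := by
  have := cls_zpow g h4 0
  simpa using this

lemma cls_zpow' (hg : ∀ u : (ZMod q)ˣ, u ∈ Subgroup.zpowers g) (h4 : (4:ℕ) ∣ orderOf g)
    (v : (ZMod q)ˣ) (m : ℤ) : cls g (v ^ m) = (m : ZMod 4) * cls g v := by
  obtain ⟨k, hk⟩ := hg v
  subst hk
  rw [← zpow_mul, cls_zpow g h4, cls_zpow g h4]
  push_cast; ring

lemma cls_neg_one (hg : ∀ u : (ZMod q)ˣ, u ∈ Subgroup.zpowers g)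
    (h8 : (8:ℕ) ∣ orderOf g) : cls g (-1) = 0 := by
  have h4 : (4:ℕ) ∣ orderOf g := dvd_trans (by norm_num) h8
  obtain ⟨m, hm⟩ := hg (-1)
  simp only [] at hm
  have h2 : g ^ (2 * m) = 1 := by
    rw [two_mul, zpow_add, hm]; simp
  have hdvd : (orderOf g : ℤ) ∣ 2 * m := orderOf_dvd_iff_zpow_eq_one.2 h2
  obtain ⟨u, hu⟩ := h8
  have h4m : (4:ℤ) ∣ m := by
    obtain ⟨t, ht⟩ := hdvd
    have h8u : (orderOf g : ℤ) = 8 * u := by exact_mod_cast hu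
    rw [h8u] at ht
    refine ⟨u * t, ?_⟩
    have : 2 * m = 2 * (4 * (u * t)) := by linarith [ht]
    omega
  rw [← hm, cls_zpow g h4]
  obtain ⟨t, ht⟩ := h4m
  subst ht; push_cast
  simp [show ((4:ZMod 4)) = 0 from by decide]

/-- the i-th quartic class, as a finset of the ring -/
def Xc (i : ZMod 4) : Finset (ZMod q) :=
  (univ.filter (fun u : (ZMod q)ˣ => cls g u = i)).image (Units.val)

def clsr (x : ZMod q) : ZMod 4 :=
  if h : IsUnit x then cls g h.unit else 0

/-- cyclotomic-style counts -/
def ncyc (i j : ZMod 4) : ℕ :=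
  (univ.filter (fun x : ZMod q => x ∈ Xc g i ∧ x - 1 ∈ Xc g j)).card

def Dset : Finset (ZMod q) := Xc g 0 ∪ Xc g 1

def Npairs : Finset (ZMod q × ZMod q) :=
  (univ ×ˢ univ).filter (fun t => t.1 ∈ Dset g ∧ t.2 ∈ Dset g ∧ t.1 - t.2 ∈ Dset g)

def OT : Finset (ZMod q × ZMod q × ZMod q) :=
  (univ ×ˢ univ ×ˢ univ).filter (fun t =>
    (peisertGraph q g).Adj t.1 t.2.1 ∧ (peisertGraph q g).Adj t.1 t.2.2
      ∧ (peisertGraph q g).Adj t.2.1 t.2.2)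

lemma mem_Xc {i : ZMod 4} {x : ZMod q} :
    x ∈ Xc g i ↔ ∃ u : (ZMod q)ˣ, cls g u = i ∧ (u : ZMod q) = x := by
  simp [Xc]

lemma isUnit_of_mem_Xc {i : ZMod 4} {x : ZMod q} (hx : x ∈ Xc g i) : IsUnit x := by
  obtain ⟨u, _, hu⟩ := (mem_Xc g).1 hx
  exact ⟨u, hu⟩

lemma coe_unit_mem_Xc {u : (ZMod q)ˣ} {i : ZMod 4} :
    (u : ZMod q) ∈ Xc g i ↔ cls g u = i := by
  rw [mem_Xc]
  constructor
  · rintro ⟨v, hv, hvu⟩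
    rwa [show v = u from Units.ext hvu] at hv
  · exact fun h => ⟨u, h, rfl⟩

lemma mem_Xc_iff_clsr {i : ZMod 4} {x : ZMod q} :
    x ∈ Xc g i ↔ IsUnit x ∧ clsr g x = i := by
  rw [mem_Xc]
  constructor
  · rintro ⟨u, hu, hux⟩
    have hI : IsUnit x := ⟨u, hux⟩
    refine ⟨hI, ?_⟩
    rw [clsr, dif_pos hI]
    rwa [show hI.unit = u from Units.ext (by rw [IsUnit.unit_spec]; exact hux.symm)]
  · rintro ⟨h, hc⟩
    rw [clsr, dif_pos h] at hc
    exact ⟨h.unit, hc, h.unit_spec⟩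

lemma class_eq_of_mem {i j : ZMod 4} {x : ZMod q} (hi : x ∈ Xc g i) (hj : x ∈ Xc g j) :
    i = j := by
  obtain ⟨hu, hc⟩ := (mem_Xc_iff_clsr g).1 hi
  obtain ⟨_, hc'⟩ := (mem_Xc_iff_clsr g).1 hj
  rw [← hc, ← hc']

lemma h4_of_h8 (h8 : (8:ℕ) ∣ orderOf g) : (4:ℕ) ∣ orderOf g :=
  dvd_trans (by norm_num) h8

section hyps
variable (hg : ∀ u : (ZMod q)ˣ, u ∈ Subgroup.zpowers g) (h8 : (8:ℕ) ∣ orderOf g)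
include hg h8

lemma mul_unit_mem_Xc (w : (ZMod q)ˣ) {i : ZMod 4} {x : ZMod q} (hx : x ∈ Xc g i) :
    (w : ZMod q) * x ∈ Xc g (cls g w + i) := by
  obtain ⟨u, hu, hux⟩ := (mem_Xc g).1 hx
  refine (mem_Xc g).2 ⟨w * u, ?_, by rw [Units.val_mul, hux]⟩
  rw [cls_mul g hg (h4_of_h8 g h8), hu]

lemma neg_mem_Xc {i : ZMod 4} {x : ZMod q} (hx : x ∈ Xc g i) : -x ∈ Xc g i := by
  have := mul_unit_mem_Xc g hg h8 (-1) hx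
  simpa [cls_neg_one g hg h8] using this

lemma card_Xc (i : ZMod 4) : (Xc g i).card = (Xc g 0).card := by
  have hc : cls g (g ^ (i.val)) = i := by
    have := cls_zpow g (h4_of_h8 g h8) (i.val : ℤ)
    rw [zpow_natCast] at this; simpa [zpow_natCast, ZMod.natCast_val, ZMod.cast_id] using this
  apply Finset.card_nbij' (fun x => (((g ^ i.val)⁻¹ : (ZMod q)ˣ) : ZMod q) * x)
      (fun x => ((g ^ i.val : (ZMod q)ˣ) : ZMod q) * x)
  · intro x hx
    have := mul_unit_mem_Xc g hg h8 (g ^ i.val)⁻¹ hx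
    rwa [cls_inv g hg (h4_of_h8 g h8), hc, neg_add_cancel] at this
  · intro x hx
    have := mul_unit_mem_Xc g hg h8 (g ^ i.val) hx
    rwa [hc, add_zero] at this
  · intro x _; dsimp only; rw [← mul_assoc, ← Units.val_mul, mul_inv_cancel, Units.val_one, one_mul]
  · intro x _; dsimp only; rw [← mul_assoc, ← Units.val_mul, inv_mul_cancel, Units.val_one, one_mul]

lemma sum_card_Xc : ∑ i : ZMod 4, (Xc g i).card = Fintype.card (ZMod q)ˣ := by
  have h1 : ∀ i : ZMod 4, (Xc g i).card
      = ((univ : Finset (ZMod q)ˣ).filter (fun u => cls g u = i)).card := by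
    intro i
    unfold Xc
    exact Finset.card_image_of_injective _ Units.val_injective
  have h2 := Finset.card_eq_sum_card_fiberwise (s := (univ : Finset (ZMod q)ˣ))
      (t := (univ : Finset (ZMod 4))) (f := cls g) (fun x _ => mem_univ _)
  rw [Finset.card_univ] at h2
  rw [h2]
  exact Finset.sum_congr rfl (fun i _ => h1 i)

lemma four_mul_card_Xc : 4 * (Xc g 0).card = Fintype.card (ZMod q)ˣ := by
  have := sum_card_Xc g hg h8
  rw [Finset.sum_congr rfl (fun i _ => card_Xc g hg h8 i)] at this
  simpa [Finset.card_univ, mul_comm] using this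

lemma ncyc_symm (i j : ZMod 4) : ncyc g i j = ncyc g j i := by
  apply Finset.card_nbij' (fun x => 1 - x) (fun x => 1 - x)
  · intro x hx
    simp only [Finset.mem_coe, mem_filter, mem_univ, true_and] at hx ⊢
    constructor
    · have := neg_mem_Xc g hg h8 hx.2
      simpa [neg_sub] using this
    · have := neg_mem_Xc g hg h8 hx.1
      simpa [sub_sub_cancel_left, show (1:ZMod q) - x - 1 = -x by ring] using this
  · intro x hx
    simp only [Finset.mem_coe, mem_filter, mem_univ, true_and] at hx ⊢
    constructor
    · have := neg_mem_Xc g hg h8 hx.2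
      simpa [neg_sub] using this
    · have := neg_mem_Xc g hg h8 hx.1
      simpa [show (1:ZMod q) - x - 1 = -x by ring] using this
  · intro x _; ring
  · intro x _; ring

lemma ncyc_inv (i j : ZMod 4) : ncyc g i j = ncyc g (-i) (j - i) := by
  apply Finset.card_nbij' (fun x => Ring.inverse x) (fun x => Ring.inverse x)
  · intro x hx
    simp only [Finset.mem_coe, mem_filter, mem_univ, true_and] at hx ⊢
    obtain ⟨u, hu, hux⟩ := (mem_Xc g).1 hx.1
    constructor
    · rw [← hux, Ring.inverse_unit]
      exact (coe_unit_mem_Xc g).2 (by rw [cls_inv g hg (h4_of_h8 g h8), hu])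
    · have heq : Ring.inverse x - 1 = ((u⁻¹ : (ZMod q)ˣ) : ZMod q) * (-(x - 1)) := by
        rw [← hux, Ring.inverse_unit]
        have : ((u⁻¹ : (ZMod q)ˣ) : ZMod q) * (u : ZMod q) = 1 := by
          rw [← Units.val_mul, inv_mul_cancel, Units.val_one]
        linear_combination this
      rw [heq]
      have h1 : -(x-1) ∈ Xc g j := neg_mem_Xc g hg h8 hx.2
      have := mul_unit_mem_Xc g hg h8 u⁻¹ h1
      rwa [cls_inv g hg (h4_of_h8 g h8), hu, show -i + j = j - i by ring] at this
  · intro x hx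
    simp only [Finset.mem_coe, mem_filter, mem_univ, true_and] at hx ⊢
    obtain ⟨u, hu, hux⟩ := (mem_Xc g).1 hx.1
    constructor
    · rw [← hux, Ring.inverse_unit]
      exact (coe_unit_mem_Xc g).2 (by rw [cls_inv g hg (h4_of_h8 g h8), hu, neg_neg])
    · have heq : Ring.inverse x - 1 = ((u⁻¹ : (ZMod q)ˣ) : ZMod q) * (-(x - 1)) := by
        rw [← hux, Ring.inverse_unit]
        have : ((u⁻¹ : (ZMod q)ˣ) : ZMod q) * (u : ZMod q) = 1 := by
          rw [← Units.val_mul, inv_mul_cancel, Units.val_one]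
        linear_combination this
      rw [heq]
      have h1 : -(x-1) ∈ Xc g (j - i) := neg_mem_Xc g hg h8 hx.2
      have := mul_unit_mem_Xc g hg h8 u⁻¹ h1
      rwa [cls_inv g hg (h4_of_h8 g h8), hu, neg_neg, show i + (j - i) = j by ring] at this
  · intro x hx
    simp only [Finset.mem_coe, mem_filter, mem_univ, true_and] at hx
    obtain ⟨u, _, hux⟩ := (mem_Xc g).1 hx.1
    dsimp only; rw [← hux, Ring.inverse_unit, Ring.inverse_unit]
    simp
  · intro x hx
    simp only [Finset.mem_coe, mem_filter, mem_univ, true_and] at hx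
    obtain ⟨u, _, hux⟩ := (mem_Xc g).1 hx.1
    dsimp only; rw [← hux, Ring.inverse_unit, Ring.inverse_unit]
    simp

end hyps

section PrimePower

lemma p_dvd_q {p a : ℕ} (ha : 1 ≤ a) (hq : q = p ^ a) : p ∣ q := by
  subst hq; exact dvd_pow_self p (by omega)

lemma isUnit_iff_rho {p a : ℕ} (hp : p.Prime) (ha : 1 ≤ a) (hq : q = p ^ a) (x : ZMod q) :
    IsUnit x ↔ (ZMod.castHom (p_dvd_q ha hq) (ZMod p)) x ≠ 0 := by
  haveI : Fact p.Prime := ⟨hp⟩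
  refine ⟨?_, ?_⟩
  · intro h h0
    have := (ZMod.castHom (p_dvd_q ha hq) (ZMod p)).isUnit_map h
    rw [h0] at this
    exact zero_ne_one (isUnit_zero_iff.mp this)
  · intro h
    have hval : ¬ (p ∣ x.val) := by
      intro hdvd
      apply h
      have : ((x.val : ℕ) : ZMod p) = 0 := (ZMod.natCast_eq_zero_iff _ _).2 hdvd
      rw [← this]
      rw [show ((x.val : ℕ) : ZMod p) = (ZMod.castHom (p_dvd_q ha hq) (ZMod p)) ((x.val : ℕ) : ZMod q) by simp]
      rw [ZMod.natCast_rightInverse x]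
    have hcop : x.val.Coprime q := by
      subst hq
      exact Nat.Coprime.pow_right a ((Nat.Prime.coprime_iff_not_dvd hp).2 hval).symm
    have := (ZMod.isUnit_iff_coprime x.val q).2 hcop
    rwa [ZMod.natCast_rightInverse x] at this

lemma card_ker_unitsMap {p a : ℕ} (hp : p.Prime) (ha : 1 ≤ a) (hq : q = p ^ a) :
    Nat.card (ZMod.unitsMap (p_dvd_q ha hq)).ker = p ^ (a - 1) := by
  haveI : Fact p.Prime := ⟨hp⟩
  haveI : NeZero p := ⟨hp.pos.ne'⟩
  have hsurj := ZMod.unitsMap_surjective (p_dvd_q ha hq)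
  have hcard : Nat.card (ZMod q)ˣ
      = Nat.card ((ZMod q)ˣ ⧸ (ZMod.unitsMap (p_dvd_q ha hq)).ker)
        * Nat.card (ZMod.unitsMap (p_dvd_q ha hq)).ker :=
    Subgroup.card_eq_card_quotient_mul_card_subgroup _
  have hquot : Nat.card ((ZMod q)ˣ ⧸ (ZMod.unitsMap (p_dvd_q ha hq)).ker)
      = Nat.card (ZMod p)ˣ :=
    Nat.card_congr (QuotientGroup.quotientKerEquivOfSurjective _ hsurj).toEquiv
  have h1 : Nat.card (ZMod q)ˣ = p ^ (a - 1) * (p - 1) := by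
    rw [Nat.card_eq_fintype_card, ZMod.card_units_eq_totient, hq,
      Nat.totient_prime_pow hp (by omega)]
  have h2 : Nat.card (ZMod p)ˣ = p - 1 := by
    rw [Nat.card_eq_fintype_card, ZMod.card_units_eq_totient, Nat.totient_prime hp]
  rw [hquot, h2, h1] at hcard
  have hp1 : 0 < p - 1 := by have := hp.two_le; omega
  exact (Nat.eq_of_mul_eq_mul_left hp1 (by linarith [hcard])).symm

lemma cls_of_mem_ker {p a : ℕ} (hp : p.Prime) (hp2 : p ≠ 2) (ha : 1 ≤ a) (hq : q = p ^ a)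
    (hg : ∀ u : (ZMod q)ˣ, u ∈ Subgroup.zpowers g) (h4 : (4:ℕ) ∣ orderOf g)
    {u : (ZMod q)ˣ} (hu : u ∈ (ZMod.unitsMap (p_dvd_q ha hq)).ker) :
    cls g u = 0 := by
  have hord : orderOf u ∣ p ^ (a - 1) := by
    rw [← card_ker_unitsMap hp ha hq]
    exact Subgroup.orderOf_dvd_natCard _ hu
  have hodd : ¬ (2 ∣ orderOf u) := by
    intro h2
    have hdp : (2:ℕ) ∣ p := Nat.Prime.dvd_of_dvd_pow Nat.prime_two (h2.trans hord)
    have : p = 2 := ((Nat.prime_dvd_prime_iff_eq Nat.prime_two hp).mp hdp).symm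
    exact hp2 this
  have hcop : Nat.Coprime 4 (orderOf u) := by
    have h2 : Nat.Coprime 2 (orderOf u) := (Nat.Prime.coprime_iff_not_dvd Nat.prime_two).2 hodd
    exact Nat.Coprime.pow_left 2 h2
  have hic : IsCoprime (4:ℤ) ((orderOf u : ℕ) : ℤ) := by
    rw [Int.isCoprime_iff_gcd_eq_one]
    exact hcop
  obtain ⟨x, y, hxy⟩ := hic
  have hord1 : u ^ ((orderOf u : ℕ) : ℤ) = 1 := by
    rw [zpow_natCast]; exact pow_orderOf_eq_one u
  have h1 : (u ^ x) ^ (4:ℤ) = u := by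
    rw [← zpow_mul]
    have : x * 4 = 1 - (orderOf u : ℤ) * y := by linarith
    rw [this, zpow_sub, zpow_mul, hord1, one_zpow, zpow_one]
    simp
  calc cls g u = cls g ((u ^ x) ^ (4:ℤ)) := by rw [h1]
    _ = ((4:ℤ) : ZMod 4) * cls g (u ^ x) := cls_zpow' g hg h4 _ _
    _ = 0 := by rw [show ((4:ℤ) : ZMod 4) = 0 by decide, zero_mul]

lemma count_nonunit_zero {p a : ℕ} (hp : p.Prime) (hp2 : p ≠ 2) (ha : 1 ≤ a) (hq : q = p ^ a)
    (hg : ∀ u : (ZMod q)ˣ, u ∈ Subgroup.zpowers g) (h4 : (4:ℕ) ∣ orderOf g) :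
    ((Xc g 0).filter (fun x => ¬ IsUnit (x - 1))).card = p ^ (a - 1) := by
  classical
  haveI : Fact p.Prime := ⟨hp⟩
  rw [← card_ker_unitsMap hp ha hq]
  rw [show Nat.card (ZMod.unitsMap (p_dvd_q ha hq)).ker
    = ((univ : Finset (ZMod q)ˣ).filter (fun u => u ∈ (ZMod.unitsMap (p_dvd_q ha hq)).ker)).card by
      rw [Nat.card_eq_fintype_card, Fintype.card_subtype]]
  set ρ := ZMod.castHom (p_dvd_q ha hq) (ZMod p) with hρ
  have hcoe : ∀ u : (ZMod q)ˣ, ((ZMod.unitsMap (p_dvd_q ha hq)) u : ZMod p) = ρ (u : ZMod q) := by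
    intro u; rfl
  apply Finset.card_nbij' (fun x => if h : IsUnit x then h.unit else 1) (Units.val)
  · intro x hx
    simp only [Finset.mem_coe, mem_filter, mem_univ, true_and] at hx ⊢
    obtain ⟨hx1, hx2⟩ := hx
    have hI : IsUnit x := isUnit_of_mem_Xc g hx1
    rw [dif_pos hI]
    rw [MonoidHom.mem_ker]
    apply Units.ext
    rw [hcoe, IsUnit.unit_spec, Units.val_one]
    have h0 : ρ (x - 1) = 0 := by
      by_contra hne
      exact hx2 ((isUnit_iff_rho hp ha hq (x-1)).2 hne)
    rw [map_sub, map_one] at h0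
    linear_combination h0
  · intro u hu
    simp only [Finset.mem_coe, mem_filter, mem_univ, true_and] at hu ⊢
    constructor
    · exact (coe_unit_mem_Xc g).2 (cls_of_mem_ker g hp hp2 ha hq hg h4 hu)
    · intro hI
      have := (isUnit_iff_rho hp ha hq _).1 hI
      apply this
      rw [map_sub, map_one]
      have : ρ (u : ZMod q) = 1 := by
        rw [← hcoe]
        rw [MonoidHom.mem_ker] at hu
        rw [hu, Units.val_one]
      rw [this]; ring
  · intro x hx
    simp only [Finset.mem_coe, mem_filter] at hx
    have hI : IsUnit x := isUnit_of_mem_Xc g hx.1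
    dsimp only; rw [dif_pos hI, IsUnit.unit_spec]
  · intro u hu
    have hI : IsUnit ((u : ZMod q)) := ⟨u, rfl⟩
    dsimp only; rw [dif_pos hI]
    exact Units.ext (IsUnit.unit_spec hI)

lemma count_nonunit_ne_zero {p a : ℕ} (hp : p.Prime) (hp2 : p ≠ 2) (ha : 1 ≤ a) (hq : q = p ^ a)
    (hg : ∀ u : (ZMod q)ˣ, u ∈ Subgroup.zpowers g) (h4 : (4:ℕ) ∣ orderOf g)
    {i : ZMod 4} (hi : i ≠ 0) :
    ((Xc g i).filter (fun x => ¬ IsUnit (x - 1))).card = 0 := by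
  classical
  rw [Finset.card_eq_zero]
  rw [Finset.eq_empty_iff_forall_notMem]
  intro x hx
  simp only [mem_filter] at hx
  obtain ⟨hx1, hx2⟩ := hx
  obtain ⟨u, hu, hux⟩ := (mem_Xc g).1 hx1
  set ρ := ZMod.castHom (p_dvd_q ha hq) (ZMod p) with hρ
  have h0 : ρ (x - 1) = 0 := by
    by_contra hne
    exact hx2 ((isUnit_iff_rho hp ha hq (x-1)).2 hne)
  have hker : u ∈ (ZMod.unitsMap (p_dvd_q ha hq)).ker := by
    rw [MonoidHom.mem_ker]
    apply Units.ext
    rw [show ((ZMod.unitsMap (p_dvd_q ha hq)) u : ZMod p) = ρ (u : ZMod q) from rfl, Units.val_one]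
    rw [map_sub, map_one] at h0
    rw [hux]
    linear_combination h0
  have := cls_of_mem_ker g hp hp2 ha hq hg h4 hker
  rw [hu] at this
  exact hi this

lemma row_sum {p a : ℕ} (hp : p.Prime) (hp2 : p ≠ 2) (ha : 1 ≤ a) (hq : q = p ^ a)
    (hg : ∀ u : (ZMod q)ˣ, u ∈ Subgroup.zpowers g) (h4 : (4:ℕ) ∣ orderOf g) (i : ZMod 4) :
    ∑ j : ZMod 4, ncyc g i j + (if i = 0 then p ^ (a - 1) else 0) = (Xc g i).card := by
  classical
  have hsplit := Finset.card_filter_add_card_filter_not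
    (s := Xc g i) (fun x => IsUnit (x - 1))
  have hN : ((Xc g i).filter (fun x => ¬ IsUnit (x - 1))).card
      = (if i = 0 then p ^ (a - 1) else 0) := by
    by_cases h : i = 0
    · rw [if_pos h, h]; exact count_nonunit_zero g hp hp2 ha hq hg h4
    · rw [if_neg h]; exact count_nonunit_ne_zero g hp hp2 ha hq hg h4 h
  have hP : ((Xc g i).filter (fun x => IsUnit (x - 1))).card = ∑ j : ZMod 4, ncyc g i j := by
    rw [Finset.card_eq_sum_card_fiberwise
      (f := fun x => clsr g (x - 1)) (t := (univ : Finset (ZMod 4))) (fun x _ => mem_univ _)]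
    apply Finset.sum_congr rfl
    intro j _
    unfold ncyc
    congr 1
    ext x
    simp only [mem_filter, mem_univ, true_and]
    constructor
    · rintro ⟨⟨h1, h2⟩, h3⟩
      exact ⟨h1, (mem_Xc_iff_clsr g).2 ⟨h2, h3⟩⟩
    · rintro ⟨h1, h2⟩
      obtain ⟨hu, hc⟩ := (mem_Xc_iff_clsr g).1 h2
      exact ⟨⟨h1, hu⟩, hc⟩
  rw [← hsplit, hP, hN]

end PrimePower

lemma key_count (n : ZMod 4 → ZMod 4 → ℕ) (f s' : ℕ)
    (hsymm : ∀ i j, n i j = n j i)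
    (hinv : ∀ i j, n i j = n (-i) (j - i))
    (hrow : ∀ i : ZMod 4, (∑ j : ZMod 4, n i j) + (if i = 0 then s' else 0) = f) :
    (n 0 0 + n 0 1 + n 1 0 + n 1 1) + (n 0 0 + n 0 3 + n 3 0 + n 3 3) + 2 * s' = 2 * f := by
  have hexp : ∀ F : ZMod 4 → ℕ, ∑ j : ZMod 4, F j = F 0 + F 1 + F 2 + F 3 := by
    intro F
    rw [show (univ : Finset (ZMod 4)) = {0,1,2,3} by decide]
    rw [Finset.sum_insert (by decide), Finset.sum_insert (by decide),
      Finset.sum_insert (by decide), Finset.sum_singleton]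
    omega
  have e0 := hrow 0; have e1 := hrow 1; have e2 := hrow 2
  rw [hexp, if_pos rfl] at e0
  rw [hexp, if_neg (by decide)] at e1
  rw [hexp, if_neg (by decide)] at e2
  have a1 : n 0 1 = n 1 0 := hsymm 0 1
  have a2 : n 1 0 = n 3 3 := by simpa [show (-1 : ZMod 4) = 3 by decide,
    show ((0 : ZMod 4) - 1) = 3 by decide] using hinv 1 0
  have b1 : n 0 3 = n 3 0 := hsymm 0 3
  have b2 : n 3 0 = n 1 1 := by simpa [show (-3 : ZMod 4) = 1 by decide,
    show ((0 : ZMod 4) - 3) = 1 by decide] using hinv 3 0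
  have c1 : n 0 2 = n 2 0 := hsymm 0 2
  have c2 : n 2 0 = n 2 2 := by simpa [show (-2 : ZMod 4) = 2 by decide,
    show ((0 : ZMod 4) - 2) = 2 by decide] using hinv 2 0
  have d1 : n 1 2 = n 3 1 := by simpa [show (-1 : ZMod 4) = 3 by decide,
    show ((2 : ZMod 4) - 1) = 1 by decide] using hinv 1 2
  have d2 : n 1 2 = n 2 1 := hsymm 1 2
  have d3 : n 3 1 = n 1 3 := hsymm 3 1
  have d4 : n 2 1 = n 2 3 := by simpa [show (-2 : ZMod 4) = 2 by decide,
    show ((1 : ZMod 4) - 2) = 3 by decide] using hinv 2 1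
  have d5 : n 2 3 = n 3 2 := hsymm 2 3
  omega

lemma card_pair_filter (i0 i1 : ZMod 4) (h : i0 ≠ i1) :
    (univ.filter (fun x : ZMod q =>
        x ∈ Xc g i0 ∪ Xc g i1 ∧ x - 1 ∈ Xc g i0 ∪ Xc g i1)).card
      = ncyc g i0 i0 + ncyc g i0 i1 + ncyc g i1 i0 + ncyc g i1 i1 := by
  classical
  rw [Finset.card_eq_sum_card_fiberwise
    (f := fun x => (clsr g x, clsr g (x - 1))) (t := ({i0, i1} ×ˢ {i0, i1}))
    (by
      intro x hx
      simp only [Finset.mem_coe, mem_filter, mem_univ, true_and, Finset.mem_union] at hx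
      rw [Finset.mem_coe, Finset.mem_product]
      constructor
      · rcases hx.1 with h1 | h1 <;>
          simp [((mem_Xc_iff_clsr g).1 h1).2]
      · rcases hx.2 with h1 | h1 <;>
          simp [((mem_Xc_iff_clsr g).1 h1).2])]
  rw [Finset.sum_product]
  have hfib : ∀ i j : ZMod 4, i = i0 ∨ i = i1 → j = i0 ∨ j = i1 →
      ((univ.filter (fun x : ZMod q =>
        x ∈ Xc g i0 ∪ Xc g i1 ∧ x - 1 ∈ Xc g i0 ∪ Xc g i1)).filter
          (fun x => (clsr g x, clsr g (x - 1)) = (i, j))).card = ncyc g i j := by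
    intro i j hi hj
    unfold ncyc
    congr 1
    ext x
    simp only [mem_filter, mem_univ, true_and, Finset.mem_union, Prod.mk.injEq]
    constructor
    · rintro ⟨⟨hx1, hx2⟩, hc1, hc2⟩
      have hu1 : IsUnit x := by
        rcases hx1 with h1 | h1 <;> exact isUnit_of_mem_Xc g h1
      have hu2 : IsUnit (x - 1) := by
        rcases hx2 with h1 | h1 <;> exact isUnit_of_mem_Xc g h1
      exact ⟨(mem_Xc_iff_clsr g).2 ⟨hu1, hc1⟩, (mem_Xc_iff_clsr g).2 ⟨hu2, hc2⟩⟩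
    · rintro ⟨hx1, hx2⟩
      refine ⟨⟨?_, ?_⟩, ((mem_Xc_iff_clsr g).1 hx1).2, ((mem_Xc_iff_clsr g).1 hx2).2⟩
      · rcases hi with rfl | rfl
        · exact Or.inl hx1
        · exact Or.inr hx1
      · rcases hj with rfl | rfl
        · exact Or.inl hx2
        · exact Or.inr hx2
  rw [Finset.sum_pair h]
  rw [Finset.sum_pair h, Finset.sum_pair h]
  rw [hfib i0 i0 (Or.inl rfl) (Or.inl rfl), hfib i0 i1 (Or.inl rfl) (Or.inr rfl),
    hfib i1 i0 (Or.inr rfl) (Or.inl rfl), hfib i1 i1 (Or.inr rfl) (Or.inr rfl)]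
  ring

lemma count_shift (hg : ∀ u : (ZMod q)ˣ, u ∈ Subgroup.zpowers g) (h8 : (8:ℕ) ∣ orderOf g)
    (w : (ZMod q)ˣ) :
    (univ.filter (fun x : ZMod q => x ∈ Dset g ∧ x - ↑w ∈ Dset g)).card
      = (univ.filter (fun z : ZMod q =>
          z ∈ Xc g (0 - cls g w) ∪ Xc g (1 - cls g w)
            ∧ z - 1 ∈ Xc g (0 - cls g w) ∪ Xc g (1 - cls g w))).card := by
  classical
  have hwinv : cls g w⁻¹ = - cls g w := cls_inv g hg (h4_of_h8 g h8) w
  apply Finset.card_nbij' (fun x => ((w⁻¹ : (ZMod q)ˣ) : ZMod q) * x)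
    (fun z => ((w : (ZMod q)ˣ) : ZMod q) * z)
  · intro x hx
    simp only [Finset.mem_coe, mem_filter, mem_univ, true_and, Dset, Finset.mem_union] at hx ⊢
    obtain ⟨hx1, hx2⟩ := hx
    constructor
    · rcases hx1 with h1 | h1
      · have := mul_unit_mem_Xc g hg h8 w⁻¹ h1
        rw [hwinv] at this
        exact Or.inl (by convert this using 2; ring)
      · have := mul_unit_mem_Xc g hg h8 w⁻¹ h1
        rw [hwinv] at this
        exact Or.inr (by convert this using 2; ring)
    · have hrw : ((w⁻¹ : (ZMod q)ˣ) : ZMod q) * x - 1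
          = ((w⁻¹ : (ZMod q)ˣ) : ZMod q) * (x - ↑w) := by
        have h1 : ((w⁻¹ : (ZMod q)ˣ) : ZMod q) * (w : ZMod q) = 1 := by
          rw [← Units.val_mul, inv_mul_cancel, Units.val_one]
        rw [mul_sub, h1]
      rw [hrw]
      rcases hx2 with h1 | h1
      · have := mul_unit_mem_Xc g hg h8 w⁻¹ h1
        rw [hwinv] at this
        exact Or.inl (by convert this using 2; ring)
      · have := mul_unit_mem_Xc g hg h8 w⁻¹ h1
        rw [hwinv] at this
        exact Or.inr (by convert this using 2; ring)
  · intro z hz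
    simp only [Finset.mem_coe, mem_filter, mem_univ, true_and, Dset, Finset.mem_union] at hz ⊢
    obtain ⟨hz1, hz2⟩ := hz
    constructor
    · rcases hz1 with h1 | h1
      · have := mul_unit_mem_Xc g hg h8 w h1
        exact Or.inl (by convert this using 2; ring)
      · have := mul_unit_mem_Xc g hg h8 w h1
        exact Or.inr (by convert this using 2; ring)
    · have hrw : (w : ZMod q) * z - ↑w = (w : ZMod q) * (z - 1) := by ring
      rw [hrw]
      rcases hz2 with h1 | h1
      · have := mul_unit_mem_Xc g hg h8 w h1
        exact Or.inl (by convert this using 2; ring)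
      · have := mul_unit_mem_Xc g hg h8 w h1
        exact Or.inr (by convert this using 2; ring)
  · intro x _
    dsimp only; rw [← mul_assoc, ← Units.val_mul, mul_inv_cancel, Units.val_one, one_mul]
  · intro z _
    dsimp only; rw [← mul_assoc, ← Units.val_mul, inv_mul_cancel, Units.val_one, one_mul]

lemma card_Npairs (hg : ∀ u : (ZMod q)ˣ, u ∈ Subgroup.zpowers g) (h8 : (8:ℕ) ∣ orderOf g) :
    (Npairs g).card = (Xc g 0).card *
      ((ncyc g 0 0 + ncyc g 0 1 + ncyc g 1 0 + ncyc g 1 1)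
        + (ncyc g 0 0 + ncyc g 0 3 + ncyc g 3 0 + ncyc g 3 3)) := by
  classical
  rw [Finset.card_eq_sum_card_fiberwise (f := Prod.snd) (t := Dset g)
    (by intro t ht; simp only [Finset.mem_coe, Npairs, mem_filter] at ht; exact ht.2.2.1)]
  have hfib : ∀ y : ZMod q, y ∈ Dset g →
      ((Npairs g).filter (fun t => t.2 = y)).card
        = (univ.filter (fun x : ZMod q => x ∈ Dset g ∧ x - y ∈ Dset g)).card := by
    intro y hy
    apply Finset.card_nbij' Prod.fst (fun x => (x, y))
    · intro t ht
      simp only [Finset.mem_coe, Npairs, mem_filter, Finset.mem_product] at ht ⊢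
      obtain ⟨⟨_, h1, h2, h3⟩, h4⟩ := ht
      rw [h4] at h3
      exact ⟨mem_univ _, h1, h3⟩
    · intro x hx
      simp only [Finset.mem_coe, mem_filter, mem_univ, true_and] at hx
      refine Finset.mem_filter.2 ⟨Finset.mem_filter.2 ⟨?_, hx.1, hy, hx.2⟩, rfl⟩
      simp
    · intro t ht
      simp only [Finset.mem_coe, Npairs, mem_filter] at ht
      exact Prod.ext rfl ht.2.symm
    · intro x _; rfl
  have hval : ∀ y : ZMod q, y ∈ Xc g 0 →
      (univ.filter (fun x : ZMod q => x ∈ Dset g ∧ x - y ∈ Dset g)).card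
        = ncyc g 0 0 + ncyc g 0 1 + ncyc g 1 0 + ncyc g 1 1 := by
    intro y hy
    obtain ⟨w, hw, hwy⟩ := (mem_Xc g).1 hy
    rw [← hwy, count_shift g hg h8 w, hw]
    rw [show (0 : ZMod 4) - 0 = 0 by decide, show (1 : ZMod 4) - 0 = 1 by decide]
    exact card_pair_filter g 0 1 (by decide)
  have hval' : ∀ y : ZMod q, y ∈ Xc g 1 →
      (univ.filter (fun x : ZMod q => x ∈ Dset g ∧ x - y ∈ Dset g)).card
        = ncyc g 3 3 + ncyc g 3 0 + ncyc g 0 3 + ncyc g 0 0 := by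
    intro y hy
    obtain ⟨w, hw, hwy⟩ := (mem_Xc g).1 hy
    rw [← hwy, count_shift g hg h8 w, hw]
    rw [show (0 : ZMod 4) - 1 = 3 by decide, show (1 : ZMod 4) - 1 = 0 by decide]
    exact card_pair_filter g 3 0 (by decide)
  have hdisj : Disjoint (Xc g 0) (Xc g 1) := by
    rw [Finset.disjoint_left]
    intro x h0 h1
    exact (by decide : (0 : ZMod 4) ≠ 1) (class_eq_of_mem g h0 h1)
  rw [show Dset g = Xc g 0 ∪ Xc g 1 from rfl, Finset.sum_union hdisj]
  rw [Finset.sum_congr rfl (fun y hy => (hfib y (Finset.mem_union_left _ hy)).trans (hval y hy)),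
    Finset.sum_congr rfl (fun y hy => (hfib y (Finset.mem_union_right _ hy)).trans (hval' y hy))]
  rw [Finset.sum_const, Finset.sum_const, card_Xc g hg h8 1, smul_eq_mul, smul_eq_mul]
  ring

section Graph

variable (hg : ∀ u : (ZMod q)ˣ, u ∈ Subgroup.zpowers g) (h8 : (8:ℕ) ∣ orderOf g)
  (hq1 : 1 < q)

include hg h8 in
lemma mem_peisertSet_iff_mem_Dset (z : ZMod q) : z ∈ peisertSet q g ↔ z ∈ Dset g := by
  have h4 := h4_of_h8 g h8
  constructor
  · rintro ⟨k, h | h⟩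
    · subst h
      refine Finset.mem_union_left _ ((coe_unit_mem_Xc g).2 ?_)
      rw [cls_zpow g h4]
      push_cast
      simp [show ((4:ZMod 4)) = 0 by decide]
    · subst h
      refine Finset.mem_union_right _ ((coe_unit_mem_Xc g).2 ?_)
      rw [cls_mul g hg h4, cls_self g h4, cls_zpow g h4]
      push_cast
      simp [show ((4:ZMod 4)) = 0 by decide]
  · intro hz
    rcases Finset.mem_union.1 hz with hz0 | hz1
    · obtain ⟨u, hu, huz⟩ := (mem_Xc g).1 hz0
      obtain ⟨k, hk⟩ := hg u
      simp only [] at hk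
      rw [← hk, cls_zpow g h4] at hu
      have : (4:ℤ) ∣ k := by
        have := (ZMod.intCast_zmod_eq_zero_iff_dvd k 4).1 hu
        exact_mod_cast this
      obtain ⟨m, hm⟩ := this
      exact ⟨m, Or.inl (by rw [← huz, ← hk, hm])⟩
    · obtain ⟨u, hu, huz⟩ := (mem_Xc g).1 hz1
      obtain ⟨k, hk⟩ := hg u
      simp only [] at hk
      rw [← hk, cls_zpow g h4] at hu
      have hdvd : (4:ℤ) ∣ (k - 1) := by
        have : ((k - 1 : ℤ) : ZMod 4) = 0 := by push_cast; rw [hu]; ring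
        have := (ZMod.intCast_zmod_eq_zero_iff_dvd (k-1) 4).1 this
        exact_mod_cast this
      obtain ⟨m, hm⟩ := hdvd
      refine ⟨m, Or.inr ?_⟩
      rw [← huz, ← hk, show k = 1 + 4 * m by omega, zpow_add, zpow_one]

include hq1 in
lemma zero_not_mem_Dset : (0 : ZMod q) ∉ Dset g := by
  haveI : Fact (1 < q) := ⟨hq1⟩
  intro h
  rcases Finset.mem_union.1 h with h | h <;>
    exact not_isUnit_zero (isUnit_of_mem_Xc g h)

include hg h8 hq1 in
lemma adj_iff (x y : ZMod q) : (peisertGraph q g).Adj x y ↔ x - y ∈ Dset g := by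
  rw [peisertGraph, SimpleGraph.fromRel_adj]
  constructor
  · rintro ⟨hne, h | h⟩
    · exact (mem_peisertSet_iff_mem_Dset g hg h8 _).1 h
    · have := (mem_peisertSet_iff_mem_Dset g hg h8 _).1 h
      rcases Finset.mem_union.1 this with h' | h'
      · exact Finset.mem_union_left _ (by simpa [neg_sub] using neg_mem_Xc g hg h8 h')
      · exact Finset.mem_union_right _ (by simpa [neg_sub] using neg_mem_Xc g hg h8 h')
  · intro h
    refine ⟨?_, Or.inl ((mem_peisertSet_iff_mem_Dset g hg h8 _).2 h)⟩
    intro hxy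
    rw [hxy, sub_self] at h
    exact zero_not_mem_Dset g hq1 h

include hg h8 hq1 in
lemma card_OT : (OT g).card = q * (Npairs g).card := by
  classical
  have : (OT g).card = ((univ : Finset (ZMod q)) ×ˢ Npairs g).card := by
    apply Finset.card_nbij' (fun t => (t.1, (t.2.1 - t.1, t.2.2 - t.1)))
      (fun t => (t.1, (t.2.1 + t.1, t.2.2 + t.1)))
    · intro t ht
      simp only [Finset.mem_coe, OT, mem_filter, Finset.mem_product, mem_univ, true_and] at ht
      obtain ⟨h1, h2, h3⟩ := ht
      rw [Finset.mem_coe, Finset.mem_product]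
      refine ⟨mem_univ _, ?_⟩
      simp only [Npairs, mem_filter, Finset.mem_product, mem_univ, true_and]
      refine ⟨(adj_iff g hg h8 hq1 _ _).1 h1.symm, (adj_iff g hg h8 hq1 _ _).1 h2.symm, ?_⟩
      rw [show t.2.1 - t.1 - (t.2.2 - t.1) = t.2.1 - t.2.2 by ring]
      exact (adj_iff g hg h8 hq1 _ _).1 h3
    · intro t ht
      rw [Finset.mem_coe, Finset.mem_product] at ht
      have ht2 := ht.2
      simp only [Npairs, mem_filter, Finset.mem_product, mem_univ, true_and] at ht2
      obtain ⟨h1, h2, h3⟩ := ht2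
      simp only [Finset.mem_coe, OT, mem_filter, Finset.mem_product, mem_univ, true_and]
      refine ⟨((adj_iff g hg h8 hq1 _ _).2 (by simpa using h1)).symm,
        ((adj_iff g hg h8 hq1 _ _).2 (by simpa using h2)).symm,
        (adj_iff g hg h8 hq1 _ _).2 (by
          rw [show t.2.1 + t.1 - (t.2.2 + t.1) = t.2.1 - t.2.2 by ring]; exact h3)⟩
    · intro t _; simp
    · intro t _; simp
  rw [this, Finset.card_product, Finset.card_univ, ZMod.card]

end Graph

lemma card_OT_six {V : Type*} [Fintype V] [DecidableEq V] (G : SimpleGraph V)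
    [DecidableRel G.Adj] :
    ((univ ×ˢ univ ×ˢ univ).filter (fun t : V × V × V =>
      G.Adj t.1 t.2.1 ∧ G.Adj t.1 t.2.2 ∧ G.Adj t.2.1 t.2.2)).card
    = 6 * (G.cliqueFinset 3).card := by
  classical
  set OT := (univ ×ˢ univ ×ˢ univ).filter (fun t : V × V × V =>
      G.Adj t.1 t.2.1 ∧ G.Adj t.1 t.2.2 ∧ G.Adj t.2.1 t.2.2) with hOT
  have hmap : ∀ t ∈ OT, ({t.1, t.2.1, t.2.2} : Finset V) ∈ G.cliqueFinset 3 := by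
    intro t ht
    simp only [hOT, mem_filter] at ht
    rw [SimpleGraph.mem_cliqueFinset_iff, SimpleGraph.is3Clique_triple_iff]
    exact ht.2
  rw [Finset.card_eq_sum_card_fiberwise hmap]
  have hfib : ∀ s ∈ G.cliqueFinset 3,
      (OT.filter (fun t => ({t.1, t.2.1, t.2.2} : Finset V) = s)).card = 6 := by
    intro s hs
    rw [SimpleGraph.mem_cliqueFinset_iff] at hs
    obtain ⟨a, b, c, hab, hac, hbc, rfl⟩ := Finset.card_eq_three.1 hs.2
    have hadj := SimpleGraph.is3Clique_triple_iff.1 hs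
    obtain ⟨Hab, Hac, Hbc⟩ := hadj
    have hset : OT.filter (fun t => ({t.1, t.2.1, t.2.2} : Finset V) = {a, b, c})
        = ({(a,b,c), (a,c,b), (b,a,c), (b,c,a), (c,a,b), (c,b,a)} : Finset (V × V × V)) := by
      ext ⟨x, y, z⟩
      simp only [mem_filter, hOT, Finset.mem_product, mem_univ, true_and, mem_insert,
        mem_singleton, Prod.mk.injEq]
      constructor
      · rintro ⟨⟨A1, A2, A3⟩, hxyz⟩
        have hxy : x ≠ y := A1.ne
        have hxz : x ≠ z := A2.ne
        have hyz : y ≠ z := A3.ne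
        have mx : x ∈ ({a, b, c} : Finset V) := by rw [← hxyz]; simp
        have my : y ∈ ({a, b, c} : Finset V) := by rw [← hxyz]; simp
        have mz : z ∈ ({a, b, c} : Finset V) := by rw [← hxyz]; simp
        simp only [mem_insert, mem_singleton] at mx my mz
        rcases mx with rfl | rfl | rfl <;> rcases my with rfl | rfl | rfl <;>
          rcases mz with rfl | rfl | rfl <;> simp_all
      · rintro (⟨rfl, rfl, rfl⟩ | ⟨rfl, rfl, rfl⟩ | ⟨rfl, rfl, rfl⟩ |
          ⟨rfl, rfl, rfl⟩ | ⟨rfl, rfl, rfl⟩ | ⟨rfl, rfl, rfl⟩) <;>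
          refine ⟨⟨?_, ?_, ?_⟩, ?_⟩ <;>
          first
            | assumption
            | exact Hab.symm | exact Hac.symm | exact Hbc.symm
            | (ext u; simp; try tauto)
    rw [hset]
    rw [Finset.card_insert_of_notMem (by simp [Prod.ext_iff]; tauto),
      Finset.card_insert_of_notMem (by simp [Prod.ext_iff]; tauto),
      Finset.card_insert_of_notMem (by simp [Prod.ext_iff]; tauto),
      Finset.card_insert_of_notMem (by simp [Prod.ext_iff]; tauto),
      Finset.card_insert_of_notMem (by simp [Prod.ext_iff]; tauto),
      Finset.card_singleton]
  rw [Finset.sum_congr rfl hfib, Finset.sum_const, smul_eq_mul, mul_comm]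

end PeisertAux

theorem stmt0 (p α : ℕ) (hp : p.Prime) (hp8 : p % 8 = 1) (hα : 1 ≤ α)
    (q : ℕ) (hq : q = p ^ α) [NeZero q]
    (g : (ZMod q)ˣ) (hg : ∀ u : (ZMod q)ˣ, u ∈ Subgroup.zpowers g) :
    48 * ((peisertGraph q g).cliqueFinset 3).card = p ^ (3 * α - 2) * (p - 1) * (p - 5) := by
  classical
  -- basic numerology
  have h17 : 17 ≤ p := by
    by_contra h
    have h9 : p = 9 := by have := hp.two_le; omega
    rw [h9] at hp
    norm_num at hp
  have hp2 : p ≠ 2 := by omega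
  obtain ⟨c, hc⟩ : ∃ c, p = 8 * c + 17 := ⟨(p - 17) / 8, by omega⟩
  have hq1 : 1 < q := by
    rw [hq]
    calc 1 < p := by omega
    _ = p ^ 1 := (pow_one p).symm
    _ ≤ p ^ α := Nat.pow_le_pow_right (by omega) hα
  -- order of g
  have hNcard : Fintype.card (ZMod q)ˣ = p ^ (α - 1) * (p - 1) := by
    rw [ZMod.card_units_eq_totient, hq, Nat.totient_prime_pow hp (by omega)]
  have horder : orderOf g = p ^ (α - 1) * (p - 1) := by
    rw [orderOf_eq_card_of_forall_mem_zpowers hg, Nat.card_eq_fintype_card, hNcard]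
  have h8 : (8:ℕ) ∣ orderOf g := by
    rw [horder]
    exact ⟨p ^ (α - 1) * (c + 2), by rw [show p - 1 = 8 * (c + 2) by omega]; ring⟩
  have h4 := h4_of_h8 g h8
  -- abbreviations
  set A := p ^ (α - 1) with hA
  set f := (Xc g 0).card with hf
  -- 4 f = A (p-1)
  have h4f : 4 * f = A * (p - 1) := by
    rw [hf, four_mul_card_Xc g hg h8, hNcard]
  have hfval : f = 2 * (A * (c + 2)) := by
    have h1 : 4 * f = 8 * (A * (c + 2)) := by
      rw [h4f, show p - 1 = 8 * (c + 2) by omega]; ring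
    omega
  -- key count
  have hkey := key_count (ncyc g) f A (ncyc_symm g hg h8) (ncyc_inv g hg h8)
    (fun i => by
      rw [hf, hA, ← card_Xc g hg h8 i]
      exact row_sum g hp hp2 hα hq hg h4 i)
  set cnt := (ncyc g 0 0 + ncyc g 0 1 + ncyc g 1 0 + ncyc g 1 1)
    + (ncyc g 0 0 + ncyc g 0 3 + ncyc g 3 0 + ncyc g 3 3) with hcnt
  have hcntval : cnt = 2 * (A * (2 * c + 3)) := by
    have e1 : A * (c + 2) = A * c + 2 * A := by ring
    have e2 : A * (2 * c + 3) = 2 * (A * c) + 3 * A := by ring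
    omega
  -- triangle count
  have hOT6 : (OT g).card = 6 * ((peisertGraph q g).cliqueFinset 3).card :=
    card_OT_six (peisertGraph q g)
  have hOTq : (OT g).card = q * (Npairs g).card := card_OT g hg h8 hq1
  have hNp : (Npairs g).card = f * cnt := card_Npairs g hg h8
  have hmain : 48 * ((peisertGraph q g).cliqueFinset 3).card = 8 * (q * (f * cnt)) := by
    rw [← hNp, ← hOTq, hOT6]; ring
  rw [hmain, hfval, hcntval, hq]
  have hpow : p ^ α * (A * A) = p ^ (3 * α - 2) := by
    rw [hA, ← pow_add, ← pow_add]
    congr 1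
    omega
  calc 8 * (p ^ α * (2 * (A * (c + 2)) * (2 * (A * (2 * c + 3)))))
      = (p ^ α * (A * A)) * (32 * ((c + 2) * (2 * c + 3))) := by ring
    _ = p ^ (3 * α - 2) * (32 * ((c + 2) * (2 * c + 3))) := by rw [hpow]
    _ = p ^ (3 * α - 2) * (p - 1) * (p - 5) := by
        rw [show p - 1 = 8 * (c + 2) by omega, show p - 5 = 4 * (2 * c + 3) by omega]
        ring
end

section
/- Let q = p^α, where p is an odd prime and α ≥ 1 is an integer, and let A be a complex-valued Dirichlet character mod q. Then for every x ∈ ℤ/qℤ: A(1 + x) = Σ_{t=0}^{p^{α−1}−1} A(1 + t·p)·δ_{t·p}(x) + (1/φ(q))·Σ_χ J(A, χ̄)·χ(−x), where the second sum runs over all Dirichlet characters χ mod q, δ_s(x) = 1 if x = s and 0 otherwise, and φ is Euler's totient. -/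
open Finset

/-- The complex-conjugate Dirichlet character. -/
noncomputable def conjChar {q : ℕ} (A : DirichletCharacter ℂ q) : DirichletCharacter ℂ q :=
  A.ringHomComp (starRingEnd ℂ)

lemma conjChar_eq_inv {q : ℕ} [NeZero q] (A : DirichletCharacter ℂ q) : conjChar A = A⁻¹ :=
  MulChar.star_eq_inv A

lemma sum_inv_mul {q : ℕ} [NeZero q] (u v : ZMod q) :
    ∑ χ : DirichletCharacter ℂ q, χ⁻¹ u * χ v =
      if IsUnit u ∧ u = v then (Nat.totient q : ℂ) else 0 := by
  by_cases hu : IsUnit u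
  · have h : ∀ χ : DirichletCharacter ℂ q, χ⁻¹ u = χ u⁻¹ := by
      intro χ
      have h1 : χ u⁻¹ * χ u = 1 := by
        rw [← map_mul, ZMod.inv_mul_of_unit u hu, map_one]
      have hne : χ u ≠ 0 := fun h0 ↦ by simp [h0] at h1
      rw [MulChar.inv_apply_eq_inv']
      exact (eq_inv_of_mul_eq_one_left h1).symm
    simp_rw [h]
    rw [DirichletCharacter.sum_char_inv_mul_char_eq ℂ hu v]
    simp [hu]
  · have h : ∀ χ : DirichletCharacter ℂ q, χ⁻¹ u = 0 := fun χ ↦ (χ⁻¹).map_nonunit hu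
    simp [h, hu]

theorem char_one_add_expansion (p α : ℕ) (hp : p.Prime) (hodd : Odd p) (hα : 1 ≤ α)
    (q : ℕ) (hq : q = p ^ α) [NeZero q] (A : DirichletCharacter ℂ q) :
    ∀ x : ZMod q,
      A (1 + x) =
        (∑ t ∈ Finset.range (p ^ (α - 1)),
            A (1 + (t : ZMod q) * (p : ZMod q)) *
              (if x = (t : ZMod q) * (p : ZMod q) then 1 else 0)) +
          (1 / (Nat.totient q : ℂ)) *
            ∑ᶠ χ : DirichletCharacter ℂ q, jacobiSum A (conjChar χ) * χ (-x) := by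
  intro x
  subst hq
  have hφ : ((Nat.totient (p ^ α)) : ℂ) ≠ 0 :=
    Nat.cast_ne_zero.mpr (Nat.totient_pos.mpr (NeZero.pos _)).ne'
  have hqpow : p ^ (α - 1) * p = p ^ α := by
    rw [← pow_succ, Nat.sub_add_cancel hα]
  have hS : ∑ᶠ χ : DirichletCharacter ℂ (p ^ α), jacobiSum A (conjChar χ) * χ (-x) =
      ∑ y : ZMod (p ^ α), A y *
        (if IsUnit (1 - y) ∧ 1 - y = -x then ((Nat.totient (p ^ α)) : ℂ) else 0) := by
    rw [finsum_eq_sum_of_fintype]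
    simp_rw [conjChar_eq_inv, jacobiSum, Finset.sum_mul]
    rw [Finset.sum_comm]
    refine Finset.sum_congr rfl fun y _ ↦ ?_
    rw [← sum_inv_mul (1 - y) (-x), Finset.mul_sum]
    exact Finset.sum_congr rfl fun χ _ ↦ by ring
  by_cases hx : IsUnit x
  · -- first sum is zero
    have hpu : ¬ IsUnit ((p : ZMod (p ^ α))) := by
      rw [ZMod.isUnit_iff_coprime]
      intro h
      have h2 : Nat.Coprime p p := h.coprime_dvd_right (dvd_pow_self p (by omega))
      rw [Nat.Coprime, Nat.gcd_self] at h2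
      exact hp.one_lt.ne' h2
    have h1 : ∀ t ∈ Finset.range (p ^ (α - 1)),
        A (1 + (t : ZMod (p ^ α)) * (p : ZMod (p ^ α))) *
          (if x = (t : ZMod (p ^ α)) * (p : ZMod (p ^ α)) then 1 else 0) = 0 := by
      intro t _
      have : x ≠ (t : ZMod (p ^ α)) * (p : ZMod (p ^ α)) := by
        intro h
        exact hpu (isUnit_of_mul_isUnit_right (h ▸ hx))
      simp [this]
    rw [Finset.sum_eq_zero h1, hS]
    have hcond : IsUnit (1 - (1 + x)) ∧ 1 - (1 + x) = -x := by
      constructor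
      · rw [show (1 : ZMod (p ^ α)) - (1 + x) = -x by ring]
        exact hx.neg
      · ring
    have h2 : ∑ y : ZMod (p ^ α), A y *
        (if IsUnit (1 - y) ∧ 1 - y = -x then ((Nat.totient (p ^ α)) : ℂ) else 0) =
        A (1 + x) * ((Nat.totient (p ^ α)) : ℂ) := by
      rw [Finset.sum_eq_single_of_mem (1 + x) (Finset.mem_univ _)]
      · rw [if_pos hcond]
      · intro y _ hy
        have : ¬ (IsUnit (1 - y) ∧ 1 - y = -x) := by
          rintro ⟨-, h⟩
          exact hy (by linear_combination -h)
        simp [this]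
    rw [h2]
    field_simp
    ring
  · -- second sum is zero
    have h2 : ∑ y : ZMod (p ^ α), A y *
        (if IsUnit (1 - y) ∧ 1 - y = -x then ((Nat.totient (p ^ α)) : ℂ) else 0) = 0 := by
      refine Finset.sum_eq_zero fun y _ ↦ ?_
      have : ¬ (IsUnit (1 - y) ∧ 1 - y = -x) := by
        rintro ⟨h1, h2'⟩
        rw [h2'] at h1
        exact hx (neg_neg x ▸ h1.neg)
      simp [this]
    rw [hS, h2, mul_zero, add_zero]
    -- x is a multiple of p
    have hxval : ¬ Nat.Coprime x.val (p ^ α) := by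
      rw [← ZMod.isUnit_iff_coprime]
      simpa using hx
    have hpdvd : p ∣ x.val := by
      by_contra hd
      exact hxval <| Nat.Coprime.pow_right α ((hp.coprime_iff_not_dvd.mpr hd).symm)
    set t₀ := x.val / p with ht₀def
    have hxt : x.val = t₀ * p := (Nat.div_mul_cancel hpdvd).symm
    have ht₀lt : t₀ < p ^ (α - 1) := by
      have hval : x.val < p ^ α := ZMod.val_lt x
      rw [ht₀def, Nat.div_lt_iff_lt_mul hp.pos, hqpow]
      exact hval
    have hxeq : x = (t₀ : ZMod (p ^ α)) * (p : ZMod (p ^ α)) := by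
      have : ((t₀ * p : ℕ) : ZMod (p ^ α)) = x := by
        rw [← hxt, ZMod.natCast_val, ZMod.cast_id]
      rw [← this]; push_cast; ring
    rw [Finset.sum_eq_single_of_mem t₀ (Finset.mem_range.mpr ht₀lt)]
    · rw [← hxeq]
      simp
    · intro t ht hne
      have hx' : x ≠ (t : ZMod (p ^ α)) * (p : ZMod (p ^ α)) := by
        intro h
        apply hne
        have hcast : ((t * p : ℕ) : ZMod (p ^ α)) = ((t₀ * p : ℕ) : ZMod (p ^ α)) := by
          push_cast
          rw [← h, hxeq]
        have htlt : t * p < p ^ α := by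
          rw [← hqpow]
          exact (Nat.mul_lt_mul_right hp.pos).mpr (Finset.mem_range.mp ht)
        have ht₀lt' : t₀ * p < p ^ α := by
          rw [← hqpow]
          exact (Nat.mul_lt_mul_right hp.pos).mpr ht₀lt
        have := congrArg ZMod.val hcast
        rw [ZMod.val_cast_of_lt htlt, ZMod.val_cast_of_lt ht₀lt'] at this
        exact Nat.eq_of_mul_eq_mul_right hp.pos this
      simp [hx']
end

section
/- Let q = p^α, where p is an odd prime and α ≥ 1 is an integer, and let A, B, C be complex-valued Dirichlet characters mod q. Then for every x ∈ ℤ/qℤ: (ε(x)·B(−1)·C(−1)/q)·Σ_{y ∈ ℤ/qℤ} B(y)·(B̄C)(1−y)·Ā(1−xy) = (q/φ(q))·Σ_χ binom(Aχ, χ)·binom(Bχ, Cχ)·χ(x), where the right-hand sum runs over all Dirichlet characters χ mod q, ε is the trivial character mod q (ε(x)=1 if x is a unit, 0 otherwise), and φ is Euler's totient. (The left side is the hypergeometric function ₂F₁(A,B;C|x) for Dirichlet characters.) -/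
open Finset

/-- The binomial coefficient `binom(A,B) = B(-1)/q * J(A, B̄)` for Dirichlet characters. -/
noncomputable def dBinom {q : ℕ} [NeZero q] (A B : DirichletCharacter ℂ q) : ℂ :=
  B (-1) / q * jacobiSum A (conjChar B)

/-- The hypergeometric function `₃F₂` for Dirichlet characters. -/
noncomputable def threeF₂ {q : ℕ} [NeZero q] (A B C D E : DirichletCharacter ℂ q)
    (x : ZMod q) : ℂ :=
  (q / (Nat.totient q : ℂ)) *
    ∑ᶠ χ : DirichletCharacter ℂ q,
      dBinom (A * χ) χ * dBinom (B * χ) (D * χ) * dBinom (C * χ) (E * χ) * χ x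

section Helpers

variable {q : ℕ} [NeZero q]

lemma conjChar_apply (A : DirichletCharacter ℂ q) (z : ZMod q) :
    conjChar A z = (starRingEnd ℂ) (A z) := rfl

lemma conjChar_apply' (A : DirichletCharacter ℂ q) (z : ZMod q) :
    conjChar A z = A (Ring.inverse z) := by
  rw [conjChar_apply, starRingEnd_apply, MulChar.star_apply', MulChar.inv_apply]

lemma conj_char_apply (A : DirichletCharacter ℂ q) (z : ZMod q) :
    (starRingEnd ℂ) (A z) = A (Ring.inverse z) :=
  (conjChar_apply A z).symm.trans (conjChar_apply' A z)

lemma ringInverse_eq {R : Type*} [CommMonoidWithZero R] {a b : R} (ha : IsUnit a)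
    (h : a * b = 1) : Ring.inverse a = b :=
  ha.mul_left_cancel (by rw [Ring.mul_inverse_cancel a ha, h])

open scoped Classical in
lemma sum_conj_orth (a b : ZMod q) :
    ∑ χ : DirichletCharacter ℂ q, χ a * (starRingEnd ℂ) (χ b)
      = if a = b ∧ IsUnit b then (q.totient : ℂ) else 0 := by
  by_cases hb : IsUnit b
  · have h : ∀ χ : DirichletCharacter ℂ q,
        χ a * (starRingEnd ℂ) (χ b) = χ (a * Ring.inverse b) := by
      intro χ
      rw [starRingEnd_apply, MulChar.star_apply', MulChar.inv_apply, ← map_mul]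
    simp only [h]
    rw [DirichletCharacter.sum_characters_eq]
    have hiff : a * Ring.inverse b = 1 ↔ a = b := by
      constructor
      · intro h1
        calc a = a * Ring.inverse b * b := by
                rw [mul_assoc, Ring.inverse_mul_cancel b hb, mul_one]
          _ = b := by rw [h1, one_mul]
      · rintro rfl; exact Ring.mul_inverse_cancel _ hb
    simp [hiff, hb]
  · simp [MulChar.map_nonunit _ hb, hb]

lemma hsum_aux (c1 c2 w : ℂ) (f g : ZMod q → ℂ) :
    (c1 * ∑ s : ZMod q, f s) * (c2 * ∑ t : ZMod q, g t) * w
      = ∑ s : ZMod q, ∑ t : ZMod q, (c1 * c2 * w) * (f s * g t) := by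
  have h : (c1 * ∑ s : ZMod q, f s) * (c2 * ∑ t : ZMod q, g t) * w
      = (c1 * c2 * w) * ((∑ s : ZMod q, f s) * ∑ t : ZMod q, g t) := by ring
  rw [h, Finset.sum_mul_sum, Finset.mul_sum]
  exact Finset.sum_congr rfl fun s _ => by rw [Finset.mul_sum]

end Helpers

theorem twoF₁_eq_binom_sum (p α : ℕ) (hp : p.Prime) (hodd : Odd p) (hα : 1 ≤ α)
    (q : ℕ) (hq : q = p ^ α) [NeZero q] (A B C : DirichletCharacter ℂ q) :
    ∀ x : ZMod q,
      ((1 : DirichletCharacter ℂ q) x * B (-1) * C (-1) / q) *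
          ∑ y : ZMod q, B y * (conjChar B * C) (1 - y) * conjChar A (1 - x * y) =
        (q / (Nat.totient q : ℂ)) *
          ∑ᶠ χ : DirichletCharacter ℂ q, dBinom (A * χ) χ * dBinom (B * χ) (C * χ) * χ x := by
  classical
  intro x
  rw [finsum_eq_sum_of_fintype]
  by_cases hx : IsUnit x
  case neg =>
    have h0 : ∀ χ : DirichletCharacter ℂ q, χ x = 0 := fun χ => χ.map_nonunit hx
    simp only [h0 (1 : DirichletCharacter ℂ q), h0, mul_zero, zero_mul, zero_div,
      Finset.sum_const_zero]
  have h1x : (1 : DirichletCharacter ℂ q) x = 1 := by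
    obtain ⟨u, rfl⟩ := hx
    exact MulChar.one_apply_coe u
  have hqC : (q : ℂ) ≠ 0 := Nat.cast_ne_zero.mpr (NeZero.ne q)
  have hφ : ((q.totient : ℕ) : ℂ) ≠ 0 :=
    Nat.cast_ne_zero.mpr (Nat.totient_pos.mpr (Nat.pos_of_ne_zero (NeZero.ne q))).ne'
  -- Step 1: rewrite each character summand as a double sum.
  have key : ∀ χ : DirichletCharacter ℂ q,
      dBinom (A * χ) χ * dBinom (B * χ) (C * χ) * χ x
        = ∑ s : ZMod q, ∑ t : ZMod q,
            (C (-1) / ((q : ℂ) * (q : ℂ)) * (A s * B t * (starRingEnd ℂ) (C (1 - t)))) *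
              (χ (s * t * x) * (starRingEnd ℂ) (χ ((1 - s) * (1 - t)))) := by
    intro χ
    have hχ1 : χ (-1) * χ (-1) = 1 := by
      rw [← map_mul]; norm_num
    simp only [dBinom, jacobiSum, conjChar_apply, MulChar.mul_apply, map_mul]
    rw [hsum_aux]
    refine Finset.sum_congr rfl fun s _ => Finset.sum_congr rfl fun t _ => ?_
    linear_combination (A s * B t * (starRingEnd ℂ) (C (1 - t)) * χ s * χ t * χ x *
      (starRingEnd ℂ) (χ (1 - s)) * (starRingEnd ℂ) (χ (1 - t)) * C (-1) / ((q : ℂ) * (q : ℂ)))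
      * hχ1
  -- Step 2: swap sums and apply orthogonality.
  have hR : ∑ χ : DirichletCharacter ℂ q, dBinom (A * χ) χ * dBinom (B * χ) (C * χ) * χ x
      = ∑ s : ZMod q, ∑ t : ZMod q,
          if s * t * x = (1 - s) * (1 - t) ∧ IsUnit ((1 - s) * (1 - t)) then
            (C (-1) / ((q : ℂ) * (q : ℂ)) * (A s * B t * (starRingEnd ℂ) (C (1 - t)))) *
              (q.totient : ℂ)
          else 0 := by
    rw [Finset.sum_congr rfl fun χ _ => key χ, Finset.sum_comm]
    refine Finset.sum_congr rfl fun s _ => ?_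
    rw [Finset.sum_comm]
    refine Finset.sum_congr rfl fun t _ => ?_
    rw [← Finset.mul_sum, sum_conj_orth, mul_ite, mul_zero]
  rw [hR, h1x]
  -- Step 3: pull constants out of the double sum.
  have pull : ∀ s t : ZMod q,
      (if s * t * x = (1 - s) * (1 - t) ∧ IsUnit ((1 - s) * (1 - t)) then
          (C (-1) / ((q : ℂ) * (q : ℂ)) * (A s * B t * (starRingEnd ℂ) (C (1 - t)))) *
            (q.totient : ℂ)
        else 0)
      = (C (-1) / ((q : ℂ) * (q : ℂ)) * (q.totient : ℂ)) *
          (if s * t * x = (1 - s) * (1 - t) ∧ IsUnit ((1 - s) * (1 - t)) then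
            A s * B t * (starRingEnd ℂ) (C (1 - t)) else 0) := by
    intro s t
    split_ifs with h
    · ring
    · ring
  simp only [pull, ← Finset.mul_sum]
  -- Step 4: restrict the `y`-sum to its support.
  have hvanish : ∀ y ∈ (Finset.univ : Finset (ZMod q)),
      B y * (conjChar B * C) (1 - y) * conjChar A (1 - x * y) ≠ 0 →
      (IsUnit y ∧ IsUnit (1 - y) ∧ IsUnit (1 - x * y)) := by
    intro y _ hne
    refine ⟨?_, ?_, ?_⟩ <;> by_contra h
    · exact hne (by rw [B.map_nonunit h]; ring)
    · exact hne (by rw [MulChar.map_nonunit _ h]; ring)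
    · exact hne (by rw [MulChar.map_nonunit (conjChar A) h]; ring)
  rw [← Finset.sum_filter_of_ne hvanish]
  -- Step 5: turn the double sum into a sum over a filtered product set.
  have hSig : ∑ s : ZMod q, ∑ t : ZMod q,
        (if s * t * x = (1 - s) * (1 - t) ∧ IsUnit ((1 - s) * (1 - t)) then
          A s * B t * (starRingEnd ℂ) (C (1 - t)) else 0)
      = ∑ pr ∈ Finset.filter
          (fun pr : ZMod q × ZMod q =>
            pr.1 * pr.2 * x = (1 - pr.1) * (1 - pr.2) ∧ IsUnit ((1 - pr.1) * (1 - pr.2)))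
          (Finset.univ ×ˢ Finset.univ),
          A pr.1 * B pr.2 * (starRingEnd ℂ) (C (1 - pr.2)) := by
    rw [← Finset.sum_product']
    exact (Finset.sum_filter _ _).symm
  rw [hSig]
  -- Step 6: the bijection between the two index sets.
  have bij : ∑ pr ∈ Finset.filter
        (fun pr : ZMod q × ZMod q =>
          pr.1 * pr.2 * x = (1 - pr.1) * (1 - pr.2) ∧ IsUnit ((1 - pr.1) * (1 - pr.2)))
        (Finset.univ ×ˢ Finset.univ),
        A pr.1 * B pr.2 * (starRingEnd ℂ) (C (1 - pr.2))
      = ∑ y ∈ Finset.filter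
          (fun y : ZMod q => IsUnit y ∧ IsUnit (1 - y) ∧ IsUnit (1 - x * y)) Finset.univ,
          B (-1) * (B y * (conjChar B * C) (1 - y) * conjChar A (1 - x * y)) := by
    refine Finset.sum_nbij' (fun pr => -(pr.2 * Ring.inverse (1 - pr.2)))
      (fun y => (Ring.inverse (1 - x * y), -(y * Ring.inverse (1 - y)))) ?_ ?_ ?_ ?_ ?_
    · -- maps into the y-set
      rintro ⟨s, t⟩ hmem
      rw [Finset.mem_filter] at hmem
      obtain ⟨-, heq, hu⟩ := hmem
      simp only at heq hu ⊢
      have h1t : IsUnit (1 - t) := isUnit_of_mul_isUnit_right hu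
      have h1s : IsUnit (1 - s) := isUnit_of_mul_isUnit_left hu
      have hstx : IsUnit (s * t * x) := heq ▸ hu
      have hs : IsUnit s := isUnit_of_mul_isUnit_left (isUnit_of_mul_isUnit_left hstx)
      have ht : IsUnit t := isUnit_of_mul_isUnit_right (isUnit_of_mul_isUnit_left hstx)
      set r := Ring.inverse (1 - t) with hrdef
      have hr : (1 - t) * r = 1 := Ring.mul_inverse_cancel _ h1t
      have hru : IsUnit r := IsUnit.of_mul_eq_one (a := r) (1 - t) (by linear_combination hr)
      have h1y : 1 - -(t * r) = r := by linear_combination -hr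
      have hsinv : (1 - x * -(t * r)) * s = 1 := by linear_combination r * heq + (1 - s) * hr
      rw [Finset.mem_filter]
      refine ⟨Finset.mem_univ _, (ht.mul hru).neg, ?_, IsUnit.of_mul_eq_one (a := _) s hsinv⟩
      rw [h1y]; exact hru
    · -- maps into the pair-set
      intro y hmem
      rw [Finset.mem_filter] at hmem
      obtain ⟨-, hy, h1y, h1xy⟩ := hmem
      set v := Ring.inverse (1 - y) with hvdef
      set w := Ring.inverse (1 - x * y) with hwdef
      have hv : (1 - y) * v = 1 := Ring.mul_inverse_cancel _ h1y
      have hw : (1 - x * y) * w = 1 := Ring.mul_inverse_cancel _ h1xy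
      have hvu : IsUnit v := IsUnit.of_mul_eq_one (a := v) (1 - y) (by linear_combination hv)
      have hwu : IsUnit w := IsUnit.of_mul_eq_one (a := w) (1 - x * y) (by linear_combination hw)
      have h1 : 1 - -(y * v) = v := by linear_combination -hv
      have h2 : 1 - w = -(x * y * w) := by linear_combination -hw
      rw [Finset.mem_filter]
      refine ⟨Finset.mem_product.mpr ⟨Finset.mem_univ _, Finset.mem_univ _⟩, ?_, ?_⟩
      · simp only
        rw [h1, h2]; ring
      · simp only
        rw [h1, h2]
        exact (((hx.mul hy).mul hwu).neg).mul hvu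
    · -- left inverse : pair → y → pair
      rintro ⟨s, t⟩ hmem
      rw [Finset.mem_filter] at hmem
      obtain ⟨-, heq, hu⟩ := hmem
      simp only at heq hu ⊢
      have h1t : IsUnit (1 - t) := isUnit_of_mul_isUnit_right hu
      have hstx : IsUnit (s * t * x) := heq ▸ hu
      have ht : IsUnit t := isUnit_of_mul_isUnit_right (isUnit_of_mul_isUnit_left hstx)
      set r := Ring.inverse (1 - t) with hrdef
      have hr : (1 - t) * r = 1 := Ring.mul_inverse_cancel _ h1t
      have hru : IsUnit r := IsUnit.of_mul_eq_one (a := r) (1 - t) (by linear_combination hr)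
      have h1y : 1 - -(t * r) = r := by linear_combination -hr
      have hsinv : (1 - x * -(t * r)) * s = 1 := by linear_combination r * heq + (1 - s) * hr
      have h1xyu : IsUnit (1 - x * -(t * r)) := IsUnit.of_mul_eq_one (a := _) s hsinv
      have e1 : Ring.inverse (1 - x * -(t * r)) = s := ringInverse_eq h1xyu hsinv
      have e2 : Ring.inverse (1 - -(t * r)) = 1 - t := by
        rw [h1y]
        exact ringInverse_eq hru (by linear_combination hr)
      ext
      · simpa using e1
      · simp only [e2]
        linear_combination t * hr
    · -- right inverse : y → pair → y
      intro y hmem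
      rw [Finset.mem_filter] at hmem
      obtain ⟨-, hy, h1y, h1xy⟩ := hmem
      set v := Ring.inverse (1 - y) with hvdef
      have hv : (1 - y) * v = 1 := Ring.mul_inverse_cancel _ h1y
      have hvu : IsUnit v := IsUnit.of_mul_eq_one (a := v) (1 - y) (by linear_combination hv)
      have h1 : 1 - -(y * v) = v := by linear_combination -hv
      simp only
      rw [h1]
      have e : Ring.inverse v = 1 - y := ringInverse_eq hvu (by linear_combination hv)
      rw [e]
      linear_combination y * hv
    · -- values agree
      rintro ⟨s, t⟩ hmem
      rw [Finset.mem_filter] at hmem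
      obtain ⟨-, heq, hu⟩ := hmem
      simp only at heq hu ⊢
      have h1t : IsUnit (1 - t) := isUnit_of_mul_isUnit_right hu
      have hstx : IsUnit (s * t * x) := heq ▸ hu
      have ht : IsUnit t := isUnit_of_mul_isUnit_right (isUnit_of_mul_isUnit_left hstx)
      set r := Ring.inverse (1 - t) with hrdef
      have hr : (1 - t) * r = 1 := Ring.mul_inverse_cancel _ h1t
      have hru : IsUnit r := IsUnit.of_mul_eq_one (a := r) (1 - t) (by linear_combination hr)
      have h1y : 1 - -(t * r) = r := by linear_combination -hr
      have hsinv : (1 - x * -(t * r)) * s = 1 := by linear_combination r * heq + (1 - s) * hr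
      have h1xyu : IsUnit (1 - x * -(t * r)) := IsUnit.of_mul_eq_one (a := _) s hsinv
      have e1 : Ring.inverse (1 - x * -(t * r)) = s := ringInverse_eq h1xyu hsinv
      have e2 : Ring.inverse (1 - -(t * r)) = 1 - t := by
        rw [h1y]
        exact ringInverse_eq hru (by linear_combination hr)
      have hB1 : B (-1) * B (-1) = 1 := by rw [← map_mul]; norm_num
      have hBr : B (1 - t) * B r = 1 := by rw [← map_mul, hr, map_one]
      have hBy : B (-(t * r)) = B (-1) * (B t * B r) := by
        rw [show (-(t * r) : ZMod q) = -1 * (t * r) by ring, map_mul, map_mul]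
      rw [MulChar.mul_apply, conjChar_apply' A, conjChar_apply' B, e1, e2, h1y,
        conj_char_apply C, ← hrdef, hBy]
      linear_combination (-(A s * B t * C r * B r * B (1 - t))) * hB1 +
        (-(A s * B t * C r)) * hBr
  rw [bij, ← Finset.mul_sum]
  field_simp
end

section
/- Let q = p^α, where p is an odd prime and α ≥ 1 is an integer, and let A, B, C, D, E be complex-valued Dirichlet characters mod q. Then ₃F₂(A,B,C;D,E|1) = ₃F₂(B·D̄, A·D̄, C·D̄; D̄, E·D̄ | 1). -/
open Finset

theorem threeF₂_transform₁ (p α : ℕ) (hp : p.Prime) (hodd : Odd p) (hα : 1 ≤ α)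
    (q : ℕ) (hq : q = p ^ α) [NeZero q] (A B C D E : DirichletCharacter ℂ q) :
    threeF₂ A B C D E 1 =
      threeF₂ (B * conjChar D) (A * conjChar D) (C * conjChar D) (conjChar D) (E * conjChar D)
        1 := by
  unfold threeF₂
  congr 1
  conv_rhs => rw [← finsum_comp_equiv (Equiv.mulLeft D)]
  refine finsum_congr fun χ => ?_
  simp only [Equiv.coe_mulLeft, conjChar_eq_inv]
  have h1 : B * D⁻¹ * (D * χ) = B * χ := by group
  have h2 : A * D⁻¹ * (D * χ) = A * χ := by group
  have h3 : D⁻¹ * (D * χ) = χ := by group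
  have h4 : C * D⁻¹ * (D * χ) = C * χ := by group
  have h5 : E * D⁻¹ * (D * χ) = E * χ := by group
  rw [h1, h2, h3, h4, h5, MulChar.map_one, MulChar.map_one]
  ring
end

section
/- Let q = p^α, where p is an odd prime and α ≥ 1 is an integer, and let A, B, C, D, E be complex-valued Dirichlet characters mod q. Then ₃F₂(A,B,C;D,E|1) = (A·E)(−1) · ₃F₂(A, B, C̄·E; A·B·D̄, E | 1). -/
open Finset

namespace ThreeF2Aux

set_option linter.unusedSectionVars false

variable {q : ℕ} [NeZero q]

lemma mul_map_inv (A : DirichletCharacter ℂ q) {u : ZMod q} (hu : IsUnit u) :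
    A u * A u⁻¹ = 1 := by
  rw [← map_mul, ZMod.mul_inv_of_unit u hu, map_one]

lemma map_ne_zero (A : DirichletCharacter ℂ q) {u : ZMod q} (hu : IsUnit u) : A u ≠ 0 :=
  left_ne_zero_of_mul_eq_one (mul_map_inv A hu)

lemma map_inv (A : DirichletCharacter ℂ q) {u : ZMod q} (hu : IsUnit u) :
    A u⁻¹ = (A u)⁻¹ :=
  eq_inv_of_mul_eq_one_right (mul_map_inv A hu)

lemma conjChar_apply (A : DirichletCharacter ℂ q) (x : ZMod q) :
    conjChar A x = starRingEnd ℂ (A x) := rfl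

lemma conjChar_apply_unit (A : DirichletCharacter ℂ q) {u : ZMod q} (hu : IsUnit u) :
    conjChar A u = (A u)⁻¹ := by
  have h : ‖A u‖ = 1 := by simpa using DirichletCharacter.unit_norm_eq_one A hu.unit
  exact (Complex.inv_eq_conj h).symm

lemma neg_one_sq (A : DirichletCharacter ℂ q) : A (-1) * A (-1) = 1 := by
  rw [← map_mul, neg_mul_neg, one_mul, map_one]

lemma conjChar_neg_one (A : DirichletCharacter ℂ q) : conjChar A (-1) = A (-1) := by
  rw [conjChar_apply_unit A (IsUnit.neg isUnit_one), inv_eq_of_mul_eq_one_right (neg_one_sq A)]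

/-- inverse is unique for units in `ZMod q`. -/
lemma zmod_inv_eq {u v : ZMod q} (hu : IsUnit u) (h : u * v = 1) : u⁻¹ = v := by
  calc u⁻¹ = u⁻¹ * (u * v) := by rw [h, mul_one]
  _ = (u⁻¹ * u) * v := by ring
  _ = v := by rw [ZMod.inv_mul_of_unit u hu, one_mul]

lemma isUnit_zmod_inv {u : ZMod q} (hu : IsUnit u) : IsUnit (u⁻¹ : ZMod q) :=
  IsUnit.of_mul_eq_one _ (ZMod.inv_mul_of_unit u hu)

open Classical in
lemma sum_chars (v w : ZMod q) :
    ∑ χ : DirichletCharacter ℂ q, χ v * conjChar χ w =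
      if v = w ∧ IsUnit v then (q.totient : ℂ) else 0 := by
  haveI : NeZero ((Monoid.exponent (ZMod q)ˣ : ℕ) : ℂ) :=
    ⟨Nat.cast_ne_zero.mpr Monoid.exponent_ne_zero_of_finite⟩
  by_cases hv : IsUnit v
  · by_cases hw : IsUnit w
    · have h := DirichletCharacter.sum_char_inv_mul_char_eq ℂ hw v
      calc ∑ χ : DirichletCharacter ℂ q, χ v * conjChar χ w
          = ∑ χ : DirichletCharacter ℂ q, χ w⁻¹ * χ v := by
            refine Finset.sum_congr rfl fun χ _ => ?_
            rw [conjChar_apply_unit χ hw, ← map_inv χ hw, mul_comm]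
        _ = _ := by
            rw [h]
            by_cases hvw : v = w
            · rw [if_pos hvw.symm, if_pos ⟨hvw, hv⟩]
            · rw [if_neg (fun h => hvw h.symm), if_neg (fun hc => hvw hc.1)]
    · have hvw : ¬(v = w ∧ IsUnit v) := fun ⟨h, _⟩ => hw (h ▸ hv)
      simp only [hvw, if_false]
      refine Finset.sum_eq_zero fun χ _ => ?_
      rw [conjChar_apply, (χ.map_nonunit hw), map_zero, mul_zero]
  · have hvw : ¬(v = w ∧ IsUnit v) := fun ⟨_, h⟩ => hv h
    simp only [hvw, if_false]
    exact Finset.sum_eq_zero fun χ _ => by rw [χ.map_nonunit hv, zero_mul]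

lemma hterm (A B C D E : DirichletCharacter ℂ q) (χ : DirichletCharacter ℂ q) :
    dBinom (A * χ) χ * dBinom (B * χ) (D * χ) * dBinom (C * χ) (E * χ) * χ 1
    = (D (-1) * E (-1) / (q : ℂ) ^ 3) *
      ∑ t : ZMod q × ZMod q × ZMod q,
        (A t.2.2 * B t.2.1 * C t.1 * conjChar D (1 - t.2.1) * conjChar E (1 - t.1)) *
        (χ (-(t.1 * t.2.1 * t.2.2)) * conjChar χ ((1 - t.1) * (1 - t.2.1) * (1 - t.2.2))) := by
  have hsq : χ (-1) * χ (-1) = 1 := neg_one_sq χ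
  simp only [dBinom, jacobiSum, map_one, mul_one, MulChar.mul_apply, conjChar_apply, map_mul,
    Finset.sum_mul, Finset.mul_sum, Fintype.sum_prod_type]
  refine Finset.sum_congr rfl fun x _ => Finset.sum_congr rfl fun y _ =>
    Finset.sum_congr rfl fun z _ => ?_
  rw [show -(x * y * z) = (-1) * (x * (y * z)) from by ring]
  simp only [map_mul]
  linear_combination (χ (-1) * ((A z * χ z * starRingEnd ℂ (χ (1 - z))) *
    (B y * χ y * starRingEnd ℂ (D (1 - y)) * starRingEnd ℂ (χ (1 - y))) *
    (C x * χ x * starRingEnd ℂ (E (1 - x)) * starRingEnd ℂ (χ (1 - x))) *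
    (D (-1) * E (-1) / (q : ℂ) ^ 3))) * hsq

open Classical in
/-- The constraint variety. -/
noncomputable def S (q : ℕ) [NeZero q] : Finset (ZMod q × ZMod q × ZMod q) :=
  Finset.univ.filter fun t =>
    -(t.1 * t.2.1 * t.2.2) = (1 - t.1) * (1 - t.2.1) * (1 - t.2.2) ∧
      IsUnit (-(t.1 * t.2.1 * t.2.2))

open Classical in
lemma core (A B C D E : DirichletCharacter ℂ q) :
    ∑ χ : DirichletCharacter ℂ q,
        dBinom (A * χ) χ * dBinom (B * χ) (D * χ) * dBinom (C * χ) (E * χ) * χ 1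
      = (D (-1) * E (-1) / (q : ℂ) ^ 3) * (q.totient : ℂ) *
          ∑ t ∈ S q,
            A t.2.2 * B t.2.1 * C t.1 * conjChar D (1 - t.2.1) * conjChar E (1 - t.1) := by
  rw [Finset.sum_congr rfl fun χ _ => hterm A B C D E χ]
  rw [← Finset.mul_sum, Finset.sum_comm]
  have step : ∀ t : ZMod q × ZMod q × ZMod q,
      (∑ χ : DirichletCharacter ℂ q,
        (A t.2.2 * B t.2.1 * C t.1 * conjChar D (1 - t.2.1) * conjChar E (1 - t.1)) *
        (χ (-(t.1 * t.2.1 * t.2.2)) * conjChar χ ((1 - t.1) * (1 - t.2.1) * (1 - t.2.2))))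
      = if (-(t.1 * t.2.1 * t.2.2) = (1 - t.1) * (1 - t.2.1) * (1 - t.2.2) ∧
            IsUnit (-(t.1 * t.2.1 * t.2.2))) then
          (A t.2.2 * B t.2.1 * C t.1 * conjChar D (1 - t.2.1) * conjChar E (1 - t.1)) *
            (q.totient : ℂ)
        else 0 := by
    intro t
    rw [← Finset.mul_sum, sum_chars]
    split_ifs with h
    · rfl
    · exact mul_zero _
  rw [Finset.sum_congr rfl fun t _ => step t, Finset.sum_ite, Finset.sum_const_zero, add_zero,
    ← Finset.sum_mul]
  rw [S]
  ring

/-- The involution on the constraint variety. -/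
noncomputable def psi (t : ZMod q × ZMod q × ZMod q) : ZMod q × ZMod q × ZMod q :=
  (t.1⁻¹, -(t.2.1 * (1 - t.2.1)⁻¹), t.2.2 * (1 - t.2.1)⁻¹)

lemma mem_S {t : ZMod q × ZMod q × ZMod q} :
    t ∈ S q ↔ (-(t.1 * t.2.1 * t.2.2) = (1 - t.1) * (1 - t.2.1) * (1 - t.2.2) ∧
      IsUnit (-(t.1 * t.2.1 * t.2.2))) := by
  classical
  simp [S]

lemma psi_mem {t : ZMod q × ZMod q × ZMod q} (ht : t ∈ S q) : psi t ∈ S q := by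
  obtain ⟨z, y, x⟩ := t
  rw [mem_S] at ht ⊢
  obtain ⟨hcon, hu⟩ := ht
  simp only [psi] at hcon hu ⊢
  have huzyx : IsUnit (z * y * x) := by rwa [IsUnit.neg_iff] at hu
  have hz : IsUnit z := isUnit_of_mul_isUnit_left (isUnit_of_mul_isUnit_left huzyx)
  have hy : IsUnit y := isUnit_of_mul_isUnit_right (isUnit_of_mul_isUnit_left huzyx)
  have hx : IsUnit x := isUnit_of_mul_isUnit_right huzyx
  have hw : IsUnit ((1 - z) * (1 - y) * (1 - x)) := hcon ▸ hu
  have h1y : IsUnit (1 - y) := isUnit_of_mul_isUnit_right (isUnit_of_mul_isUnit_left hw)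
  have haI : IsUnit ((1 - y)⁻¹ : ZMod q) := isUnit_zmod_inv h1y
  have hbI : IsUnit (z⁻¹ : ZMod q) := isUnit_zmod_inv hz
  have ha : (1 - y) * (1 - y)⁻¹ = 1 := ZMod.mul_inv_of_unit _ h1y
  have hb : z * z⁻¹ = 1 := ZMod.mul_inv_of_unit _ hz
  constructor
  · -- the transformed constraint
    have hU : IsUnit ((1 - y) * (1 - y) * z) := (h1y.mul h1y).mul hz
    apply hU.mul_left_cancel
    have e1 : (1 - y) * (1 - x * (1 - y)⁻¹) = 1 - x - y := by
      calc (1 - y) * (1 - x * (1 - y)⁻¹) = (1 - y) - x * ((1 - y) * (1 - y)⁻¹) := by ring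
      _ = 1 - x - y := by rw [ha]; ring
    have e2 : (1 - y) * (1 - (-(y * (1 - y)⁻¹))) = 1 := by
      calc (1 - y) * (1 - (-(y * (1 - y)⁻¹))) = (1 - y) + y * ((1 - y) * (1 - y)⁻¹) := by ring
      _ = 1 := by rw [ha]; ring
    have e3 : z * (1 - z⁻¹) = z - 1 := by
      calc z * (1 - z⁻¹) = z - z * z⁻¹ := by ring
      _ = z - 1 := by rw [hb]
    calc (1 - y) * (1 - y) * z * -(z⁻¹ * -(y * (1 - y)⁻¹) * (x * (1 - y)⁻¹))
        = x * y * (((1 - y) * (1 - y)⁻¹) * ((1 - y) * (1 - y)⁻¹)) * (z * z⁻¹) := by ring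
      _ = x * y := by rw [ha, hb]; ring
      _ = (z - 1) * (1 - x - y) := by linear_combination - hcon
      _ = (z * (1 - z⁻¹)) * ((1 - y) * (1 - (-(y * (1 - y)⁻¹)))) *
            ((1 - y) * (1 - x * (1 - y)⁻¹)) := by rw [e1, e2, e3]; ring
      _ = (1 - y) * (1 - y) * z *
            ((1 - z⁻¹) * (1 - -(y * (1 - y)⁻¹)) * (1 - x * (1 - y)⁻¹)) := by ring
  · -- unit condition
    rw [show -(z⁻¹ * -(y * (1 - y)⁻¹) * (x * (1 - y)⁻¹)) =
        x * y * (1 - y)⁻¹ * (1 - y)⁻¹ * z⁻¹ from by ring]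
    exact (((hx.mul hy).mul haI).mul haI).mul hbI

lemma psi_psi {t : ZMod q × ZMod q × ZMod q} (ht : t ∈ S q) : psi (psi t) = t := by
  obtain ⟨z, y, x⟩ := t
  rw [mem_S] at ht
  obtain ⟨hcon, hu⟩ := ht
  simp only at hcon hu
  have huzyx : IsUnit (z * y * x) := by rwa [IsUnit.neg_iff] at hu
  have hz : IsUnit z := isUnit_of_mul_isUnit_left (isUnit_of_mul_isUnit_left huzyx)
  have hw : IsUnit ((1 - z) * (1 - y) * (1 - x)) := hcon ▸ hu
  have h1y : IsUnit (1 - y) := isUnit_of_mul_isUnit_right (isUnit_of_mul_isUnit_left hw)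
  have haI : IsUnit ((1 - y)⁻¹ : ZMod q) := isUnit_zmod_inv h1y
  have ha : (1 - y) * (1 - y)⁻¹ = 1 := ZMod.mul_inv_of_unit _ h1y
  have h1y' : (1 : ZMod q) - (-(y * (1 - y)⁻¹)) = (1 - y)⁻¹ := by
    calc (1 : ZMod q) - (-(y * (1 - y)⁻¹)) = 1 + y * (1 - y)⁻¹ := by ring
    _ = ((1 - y) * (1 - y)⁻¹) + y * (1 - y)⁻¹ := by rw [ha]
    _ = (1 - y)⁻¹ := by ring
  have hinv_aI : ((1 - y)⁻¹ : ZMod q)⁻¹ = 1 - y :=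
    zmod_inv_eq haI (by rw [mul_comm]; exact ha)
  simp only [psi]
  refine Prod.ext ?_ (Prod.ext ?_ ?_)
  · exact zmod_inv_eq (isUnit_zmod_inv hz) (ZMod.inv_mul_of_unit z hz)
  · simp only
    rw [h1y', hinv_aI]
    calc -(-(y * (1 - y)⁻¹) * (1 - y)) = y * ((1 - y) * (1 - y)⁻¹) := by ring
    _ = y := by rw [ha]; ring
  · simp only
    rw [h1y', hinv_aI]
    calc x * (1 - y)⁻¹ * (1 - y) = x * ((1 - y) * (1 - y)⁻¹) := by ring
    _ = x := by rw [ha]; ring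

lemma termwise (A B C D E : DirichletCharacter ℂ q) {t : ZMod q × ZMod q × ZMod q}
    (ht : t ∈ S q) :
    E (-1) * (A t.2.2 * B t.2.1 * C t.1 * conjChar D (1 - t.2.1) * conjChar E (1 - t.1))
  = B (-1) * (A (psi t).2.2 * B (psi t).2.1 * (conjChar C * E) (psi t).1 *
      conjChar (A * B * conjChar D) (1 - (psi t).2.1) * conjChar E (1 - (psi t).1)) := by
  obtain ⟨z, y, x⟩ := t
  rw [mem_S] at ht
  obtain ⟨hcon, hu⟩ := ht
  simp only [psi] at hcon hu ⊢
  have huzyx : IsUnit (z * y * x) := by rwa [IsUnit.neg_iff] at hu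
  have hz : IsUnit z := isUnit_of_mul_isUnit_left (isUnit_of_mul_isUnit_left huzyx)
  have hy : IsUnit y := isUnit_of_mul_isUnit_right (isUnit_of_mul_isUnit_left huzyx)
  have hx : IsUnit x := isUnit_of_mul_isUnit_right huzyx
  have hw : IsUnit ((1 - z) * (1 - y) * (1 - x)) := hcon ▸ hu
  have h1y : IsUnit (1 - y) := isUnit_of_mul_isUnit_right (isUnit_of_mul_isUnit_left hw)
  have ha : (1 - y) * (1 - y)⁻¹ = 1 := ZMod.mul_inv_of_unit _ h1y
  have hb : z * z⁻¹ = 1 := ZMod.mul_inv_of_unit _ hz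
  have h1y' : (1 : ZMod q) - (-(y * (1 - y)⁻¹)) = (1 - y)⁻¹ := by
    calc (1 : ZMod q) - (-(y * (1 - y)⁻¹)) = 1 + y * (1 - y)⁻¹ := by ring
    _ = ((1 - y) * (1 - y)⁻¹) + y * (1 - y)⁻¹ := by rw [ha]
    _ = (1 - y)⁻¹ := by ring
  have h1z' : (1 : ZMod q) - z⁻¹ = -((1 - z) * z⁻¹) := by
    calc (1 : ZMod q) - z⁻¹ = z * z⁻¹ - z⁻¹ := by rw [hb]
    _ = -((1 - z) * z⁻¹) := by ring
  rw [h1y', h1z']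
  rw [map_mul A, map_inv A h1y]
  rw [show -(y * (1 - y)⁻¹) = (-1) * (y * (1 - y)⁻¹) from by ring, map_mul B, map_mul B,
    map_inv B h1y]
  rw [MulChar.mul_apply, conjChar_apply_unit C (isUnit_zmod_inv hz), map_inv C hz, inv_inv,
    map_inv E hz]
  rw [conjChar_apply_unit (A * B * conjChar D) (isUnit_zmod_inv h1y), MulChar.mul_apply,
    MulChar.mul_apply, map_inv A h1y, map_inv B h1y, map_inv (conjChar D) h1y]
  rw [show -((1 - z) * z⁻¹) = (-1) * ((1 - z) * z⁻¹) from by ring, map_mul (conjChar E),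
    map_mul (conjChar E), conjChar_neg_one, map_inv (conjChar E) hz, conjChar_apply_unit E hz,
    inv_inv]
  have hA1 : A (1 - y) ≠ 0 := map_ne_zero A h1y
  have hB1 : B (1 - y) ≠ 0 := map_ne_zero B h1y
  have hD1 : conjChar D (1 - y) ≠ 0 := map_ne_zero (conjChar D) h1y
  have hEz : E z ≠ 0 := map_ne_zero E hz
  have hsB : B (-1) * B (-1) = 1 := neg_one_sq B
  have hsE : E (-1) * E (-1) = 1 := neg_one_sq E
  field_simp
  linear_combination (-(E (-1) * A x * B y * C z * (conjChar E) (1 - z))) * hsB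

lemma hkey (A B C D E : DirichletCharacter ℂ q) :
    (∑ t ∈ S q, E (-1) *
        (A t.2.2 * B t.2.1 * C t.1 * conjChar D (1 - t.2.1) * conjChar E (1 - t.1)))
  = ∑ t ∈ S q, B (-1) * (A t.2.2 * B t.2.1 * (conjChar C * E) t.1 *
      conjChar (A * B * conjChar D) (1 - t.2.1) * conjChar E (1 - t.1)) :=
  Finset.sum_nbij' psi psi (fun _ ha => psi_mem ha) (fun _ ha => psi_mem ha)
    (fun _ ha => psi_psi ha) (fun _ ha => psi_psi ha) (fun _ ha => termwise A B C D E ha)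

end ThreeF2Aux

theorem threeF₂_transform₃ (p α : ℕ) (hp : p.Prime) (hodd : Odd p) (hα : 1 ≤ α)
    (q : ℕ) (hq : q = p ^ α) [NeZero q] (A B C D E : DirichletCharacter ℂ q) :
    threeF₂ A B C D E 1 =
      (A * E) (-1) * threeF₂ A B (conjChar C * E) (A * B * conjChar D) E 1 := by
  unfold threeF₂
  rw [finsum_eq_sum_of_fintype, finsum_eq_sum_of_fintype]
  rw [ThreeF2Aux.core A B C D E, ThreeF2Aux.core A B (conjChar C * E) (A * B * conjChar D) E]
  have hkey := ThreeF2Aux.hkey A B C D E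
  rw [← Finset.mul_sum, ← Finset.mul_sum] at hkey
  rw [MulChar.mul_apply A E, MulChar.mul_apply (A * B) (conjChar D), MulChar.mul_apply A B,
    ThreeF2Aux.conjChar_neg_one D]
  set SL := ∑ t ∈ ThreeF2Aux.S q,
      A t.2.2 * B t.2.1 * C t.1 * conjChar D (1 - t.2.1) * conjChar E (1 - t.1) with hSL
  set SR := ∑ t ∈ ThreeF2Aux.S q, A t.2.2 * B t.2.1 * (conjChar C * E) t.1 *
      conjChar (A * B * conjChar D) (1 - t.2.1) * conjChar E (1 - t.1) with hSR
  have hA : A (-1) * A (-1) = 1 := ThreeF2Aux.neg_one_sq A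
  have hE : E (-1) * E (-1) = 1 := ThreeF2Aux.neg_one_sq E
  set P := (q : ℂ) / (q.totient : ℂ) with hP
  set T := ((q.totient : ℕ) : ℂ) with hT
  linear_combination (P * T * (D (-1)) / (q : ℂ) ^ 3) * hkey -
    (P * T * (D (-1)) * (B (-1)) * SR * (E (-1)) * (E (-1)) / (q : ℂ) ^ 3) * hA -
    (P * T * (D (-1)) * (B (-1)) * SR / (q : ℂ) ^ 3) * hE
end

section
/- Let q = p^α, where p is an odd prime and α ≥ 1 is an integer, and let A, B, C, D, E be complex-valued Dirichlet characters mod q. Then ₃F₂(A,B,C;D,E|1) = (A·D)(−1) · ₃F₂(A, B̄·D, C; D, A·C·Ē | 1). -/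
open Finset

set_option linter.unusedSectionVars false
set_option maxHeartbeats 1000000

section Aux
variable {q : ℕ} [NeZero q]

lemma zinv_eq {a b : ZMod q} (h : a * b = 1) : a⁻¹ = b := by
  have ha : IsUnit a := IsUnit.of_mul_eq_one _ h
  calc a⁻¹ = a⁻¹ * (a * b) := by rw [h, mul_one]
  _ = (a⁻¹ * a) * b := by ring
  _ = b := by rw [ZMod.inv_mul_of_unit a ha, one_mul]

lemma char_inv_apply (χ : DirichletCharacter ℂ q) {a : ZMod q} (ha : IsUnit a) :
    χ a⁻¹ = (starRingEnd ℂ) (χ a) := by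
  obtain ⟨u, rfl⟩ := ha
  have hpow : (χ ↑u) ^ q.totient = 1 := by
    rw [← map_pow, ← Units.val_pow_eq_pow_val, ZMod.pow_totient, Units.val_one, map_one]
  have hnorm : ‖χ ↑u‖ = 1 :=
    Complex.norm_eq_one_of_pow_eq_one hpow (Nat.totient_pos.mpr (NeZero.pos q)).ne'
  have h1 : χ ↑u * χ ((u : ZMod q))⁻¹ = 1 := by
    rw [← map_mul, ZMod.mul_inv_of_unit _ u.isUnit, map_one]
  have h2 : χ ((u : ZMod q))⁻¹ = (χ ↑u)⁻¹ := eq_inv_of_mul_eq_one_left (by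
    rw [mul_comm] at h1; exact h1)
  rw [h2, Complex.inv_eq_conj hnorm]

lemma sq_neg_one (χ : DirichletCharacter ℂ q) : χ (-1) * χ (-1) = 1 := by
  rw [← map_mul, neg_mul_neg, one_mul, map_one]

lemma conj_neg_one (χ : DirichletCharacter ℂ q) : (starRingEnd ℂ) (χ (-1)) = χ (-1) := by
  rcases mul_self_eq_one_iff.mp (sq_neg_one χ) with h | h <;> rw [h] <;> simp

lemma sum_conj (a : ZMod q) {b : ZMod q} (hb : IsUnit b) :
    ∑ χ : DirichletCharacter ℂ q, χ a * (starRingEnd ℂ) (χ b)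
      = if b = a then (q.totient : ℂ) else 0 := by
  have h : ∀ χ : DirichletCharacter ℂ q, χ a * (starRingEnd ℂ) (χ b) = χ b⁻¹ * χ a := by
    intro χ; rw [char_inv_apply χ hb]; ring
  simp_rw [h]
  exact DirichletCharacter.sum_char_inv_mul_char_eq ℂ hb a

lemma triple_mul (f g h : ZMod q → ℂ) (c : ℂ) :
    ∑ x : ZMod q, ∑ y : ZMod q, ∑ z : ZMod q, c * (f x * g y * h z)
      = c * ((∑ x : ZMod q, f x) * (∑ y : ZMod q, g y) * (∑ z : ZMod q, h z)) := by
  conv_rhs => rw [Finset.sum_mul_sum, Finset.sum_mul, Finset.mul_sum]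
  refine Finset.sum_congr rfl fun x _ => ?_
  conv_rhs => rw [Finset.sum_mul, Finset.mul_sum]
  refine Finset.sum_congr rfl fun y _ => ?_
  conv_rhs => rw [Finset.mul_sum, Finset.mul_sum]

open scoped Classical in
noncomputable def Vset (q : ℕ) [NeZero q] : Finset (ZMod q × ZMod q × ZMod q) :=
  Finset.univ.filter fun t =>
    ((1 - t.1) * (1 - t.2.1) * (1 - t.2.2) = -(t.1 * t.2.1 * t.2.2)) ∧
      IsUnit ((1 - t.1) * (1 - t.2.1) * (1 - t.2.2))

open scoped Classical in
lemma orth (x y z : ZMod q) :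
    ∑ χ : DirichletCharacter ℂ q,
        χ (-(x * y * z)) * (starRingEnd ℂ) (χ ((1 - x) * (1 - y) * (1 - z)))
      = if ((1 - x) * (1 - y) * (1 - z) = -(x * y * z) ∧
            IsUnit ((1 - x) * (1 - y) * (1 - z))) then (q.totient : ℂ) else 0 := by
  by_cases hb : IsUnit ((1 - x) * (1 - y) * (1 - z))
  · rw [sum_conj _ hb]
    by_cases he : (1 - x) * (1 - y) * (1 - z) = -(x * y * z)
    · rw [if_pos he, if_pos ⟨he, hb⟩]
    · rw [if_neg he, if_neg (by tauto)]
  · simp [MulChar.map_nonunit _ hb, hb]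

open scoped Classical in
lemma repr₃ (A B C D E : DirichletCharacter ℂ q) :
    threeF₂ A B C D E 1 = (D (-1) * E (-1)) / (q : ℂ) ^ 2 *
      ∑ t ∈ Vset q, A t.1 * B t.2.1 * C t.2.2 *
        (starRingEnd ℂ) (D (1 - t.2.1)) * (starRingEnd ℂ) (E (1 - t.2.2)) := by
  have hφ : ((q.totient : ℂ)) ≠ 0 := by
    exact_mod_cast (Nat.totient_pos.mpr (NeZero.pos q)).ne'
  have hq0 : (q : ℂ) ≠ 0 := by exact_mod_cast (NeZero.ne q)
  have hterm : ∀ χ : DirichletCharacter ℂ q,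
      dBinom (A * χ) χ * dBinom (B * χ) (D * χ) * dBinom (C * χ) (E * χ) * χ 1
        = (D (-1) * E (-1)) / (q : ℂ) ^ 3 *
          ∑ x : ZMod q, ∑ y : ZMod q, ∑ z : ZMod q,
            (A x * B y * C z * (starRingEnd ℂ) (D (1 - y)) * (starRingEnd ℂ) (E (1 - z))) *
              (χ (-(x * y * z)) * (starRingEnd ℂ) (χ ((1 - x) * (1 - y) * (1 - z)))) := by
    intro χ
    have e1 : ∀ x y z : ZMod q,
        (A x * B y * C z * (starRingEnd ℂ) (D (1 - y)) * (starRingEnd ℂ) (E (1 - z))) *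
            (χ (-(x * y * z)) * (starRingEnd ℂ) (χ ((1 - x) * (1 - y) * (1 - z))))
          = χ (-1) * ((A x * χ x * (starRingEnd ℂ) (χ (1 - x)))
              * ((B y * χ y) * ((starRingEnd ℂ) (D (1 - y)) * (starRingEnd ℂ) (χ (1 - y))))
              * ((C z * χ z) * ((starRingEnd ℂ) (E (1 - z)) * (starRingEnd ℂ) (χ (1 - z))))) := by
      intro x y z
      have hm : χ (-(x * y * z)) = χ (-1) * (χ x * (χ y * χ z)) := by
        rw [show -(x * y * z) = (-1 : ZMod q) * (x * (y * z)) by ring, map_mul, map_mul, map_mul]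
      have hc : (starRingEnd ℂ) (χ ((1 - x) * (1 - y) * (1 - z)))
          = (starRingEnd ℂ) (χ (1 - x)) * ((starRingEnd ℂ) (χ (1 - y)) *
              (starRingEnd ℂ) (χ (1 - z))) := by
        simp only [map_mul]; ring
      rw [hm, hc]; ring
    have e2 : ∑ x : ZMod q, ∑ y : ZMod q, ∑ z : ZMod q,
        (A x * B y * C z * (starRingEnd ℂ) (D (1 - y)) * (starRingEnd ℂ) (E (1 - z))) *
          (χ (-(x * y * z)) * (starRingEnd ℂ) (χ ((1 - x) * (1 - y) * (1 - z))))
        = χ (-1) * ((∑ x : ZMod q, A x * χ x * (starRingEnd ℂ) (χ (1 - x)))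
            * (∑ y : ZMod q, (B y * χ y) * ((starRingEnd ℂ) (D (1 - y)) * (starRingEnd ℂ) (χ (1 - y))))
            * (∑ z : ZMod q, (C z * χ z) * ((starRingEnd ℂ) (E (1 - z)) * (starRingEnd ℂ) (χ (1 - z))))) := by
      rw [← triple_mul]
      exact Finset.sum_congr rfl fun x _ => Finset.sum_congr rfl fun y _ =>
        Finset.sum_congr rfl fun z _ => e1 x y z
    rw [e2]
    simp only [dBinom, jacobiSum, conjChar, MulChar.ringHomComp_apply, MulChar.mul_apply,
      map_mul, map_one, mul_one]
    rcases mul_self_eq_one_iff.mp (sq_neg_one χ) with hc | hc <;> rw [hc] <;> ring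
  unfold threeF₂
  rw [finsum_eq_sum_of_fintype]
  simp only [hterm]
  rw [← Finset.mul_sum]
  have swap : ∑ χ : DirichletCharacter ℂ q, ∑ x : ZMod q, ∑ y : ZMod q, ∑ z : ZMod q,
      (A x * B y * C z * (starRingEnd ℂ) (D (1 - y)) * (starRingEnd ℂ) (E (1 - z))) *
        (χ (-(x * y * z)) * (starRingEnd ℂ) (χ ((1 - x) * (1 - y) * (1 - z))))
      = ∑ x : ZMod q, ∑ y : ZMod q, ∑ z : ZMod q,
          (A x * B y * C z * (starRingEnd ℂ) (D (1 - y)) * (starRingEnd ℂ) (E (1 - z))) *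
            ∑ χ : DirichletCharacter ℂ q,
              (χ (-(x * y * z)) * (starRingEnd ℂ) (χ ((1 - x) * (1 - y) * (1 - z)))) := by
    rw [Finset.sum_comm]
    refine Finset.sum_congr rfl fun x _ => ?_
    rw [Finset.sum_comm]
    refine Finset.sum_congr rfl fun y _ => ?_
    rw [Finset.sum_comm]
    refine Finset.sum_congr rfl fun z _ => ?_
    rw [← Finset.mul_sum]
  rw [swap]
  have collect : ∑ x : ZMod q, ∑ y : ZMod q, ∑ z : ZMod q,
      (A x * B y * C z * (starRingEnd ℂ) (D (1 - y)) * (starRingEnd ℂ) (E (1 - z))) *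
        ∑ χ : DirichletCharacter ℂ q,
          (χ (-(x * y * z)) * (starRingEnd ℂ) (χ ((1 - x) * (1 - y) * (1 - z))))
      = (q.totient : ℂ) * ∑ t ∈ Vset q, A t.1 * B t.2.1 * C t.2.2 *
          (starRingEnd ℂ) (D (1 - t.2.1)) * (starRingEnd ℂ) (E (1 - t.2.2)) := by
    simp only [orth]
    rw [Vset, Finset.mul_sum, Finset.sum_filter]
    simp only [Fintype.sum_prod_type]
    refine Finset.sum_congr rfl fun x _ => Finset.sum_congr rfl fun y _ =>
      Finset.sum_congr rfl fun z _ => ?_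
    split_ifs <;> ring
  rw [collect]
  field_simp

def emap (q : ℕ) [NeZero q] : ZMod q × ZMod q × ZMod q → ZMod q × ZMod q × ZMod q :=
  fun t => (t.1 * (1 - t.2.2)⁻¹, t.2.1⁻¹, -(t.2.2 * (1 - t.2.2)⁻¹))

lemma mem_Vset {t : ZMod q × ZMod q × ZMod q} : t ∈ Vset q ↔
    ((1 - t.1) * (1 - t.2.1) * (1 - t.2.2) = -(t.1 * t.2.1 * t.2.2)) ∧
      IsUnit ((1 - t.1) * (1 - t.2.1) * (1 - t.2.2)) := by
  classical
  rw [Vset, Finset.mem_filter]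
  exact ⟨fun h => h.2, fun h => ⟨Finset.mem_univ _, h⟩⟩

lemma units_of_mem {t : ZMod q × ZMod q × ZMod q} (h : t ∈ Vset q) :
    IsUnit t.1 ∧ IsUnit t.2.1 ∧ IsUnit t.2.2 ∧
      IsUnit (1 - t.1) ∧ IsUnit (1 - t.2.1) ∧ IsUnit (1 - t.2.2) := by
  obtain ⟨heq, hU⟩ := mem_Vset.mp h
  have hP := hU
  have hxyz : IsUnit (t.1 * t.2.1 * t.2.2) := by
    rw [heq] at hU; exact (IsUnit.neg_iff _).mp hU
  exact ⟨isUnit_of_mul_isUnit_left (isUnit_of_mul_isUnit_left hxyz),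
    isUnit_of_mul_isUnit_right (isUnit_of_mul_isUnit_left hxyz),
    isUnit_of_mul_isUnit_right hxyz,
    isUnit_of_mul_isUnit_left (isUnit_of_mul_isUnit_left hP),
    isUnit_of_mul_isUnit_right (isUnit_of_mul_isUnit_left hP),
    isUnit_of_mul_isUnit_right hP⟩

lemma emap_mem {t : ZMod q × ZMod q × ZMod q} (h : t ∈ Vset q) : emap q t ∈ Vset q := by
  obtain ⟨hx, hy, hz, h1x, h1y, h1z⟩ := units_of_mem h
  obtain ⟨heq, hU⟩ := mem_Vset.mp h
  obtain ⟨x, y, z⟩ := t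
  simp only at hx hy hz h1x h1y h1z heq hU
  have hu : (1 - z) * (1 - z)⁻¹ = 1 := ZMod.mul_inv_of_unit _ h1z
  have hv : y * y⁻¹ = 1 := ZMod.mul_inv_of_unit _ hy
  have hu' : IsUnit ((1 - z)⁻¹ : ZMod q) :=
    IsUnit.of_mul_eq_one _ (ZMod.inv_mul_of_unit _ h1z)
  have hv' : IsUnit ((y : ZMod q)⁻¹) := IsUnit.of_mul_eq_one _ (ZMod.inv_mul_of_unit _ hy)
  rw [mem_Vset]
  simp only [emap]
  have heq2 : (1 - x * (1 - z)⁻¹) * (1 - y⁻¹) * (1 - -(z * (1 - z)⁻¹))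
      = -(x * (1 - z)⁻¹ * y⁻¹ * -(z * (1 - z)⁻¹)) := by
    have h1X : (1 : ZMod q) - x * (1 - z)⁻¹ = (1 - x - z) * (1 - z)⁻¹ := by
      linear_combination -hu
    have h1Y : (1 : ZMod q) - y⁻¹ = -((1 - y) * y⁻¹) := by linear_combination -hv
    have h1Z : (1 : ZMod q) - -(z * (1 - z)⁻¹) = (1 - z)⁻¹ := by linear_combination -hu
    rw [h1X, h1Y, h1Z]
    linear_combination (-((1 - z)⁻¹ * (1 - z)⁻¹ * y⁻¹)) * heq
  refine ⟨heq2, ?_⟩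
  rw [heq2]
  exact (((hx.mul hu').mul hv').mul ((hz.mul hu').neg)).neg

lemma emap_invol {t : ZMod q × ZMod q × ZMod q} (h : t ∈ Vset q) : emap q (emap q t) = t := by
  obtain ⟨hx, hy, hz, h1x, h1y, h1z⟩ := units_of_mem h
  obtain ⟨x, y, z⟩ := t
  simp only at hx hy hz h1x h1y h1z
  have hu : (1 - z) * (1 - z)⁻¹ = 1 := ZMod.mul_inv_of_unit _ h1z
  have h1Z : (1 : ZMod q) - -(z * (1 - z)⁻¹) = (1 - z)⁻¹ := by linear_combination -hu
  have hinvu : (((1 - z)⁻¹ : ZMod q))⁻¹ = 1 - z := zinv_eq (ZMod.inv_mul_of_unit _ h1z)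
  have hinvv : ((y : ZMod q)⁻¹)⁻¹ = y := zinv_eq (ZMod.inv_mul_of_unit _ hy)
  simp only [emap]
  refine Prod.ext ?_ (Prod.ext ?_ ?_)
  · show x * (1 - z)⁻¹ * (1 - -(z * (1 - z)⁻¹))⁻¹ = x
    rw [h1Z, hinvu]; linear_combination x * hu
  · exact hinvv
  · show -(-(z * (1 - z)⁻¹) * (1 - -(z * (1 - z)⁻¹))⁻¹) = z
    rw [h1Z, hinvu]; linear_combination z * hu

lemma emap_term (A B C D E : DirichletCharacter ℂ q) {t : ZMod q × ZMod q × ZMod q}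
    (h : t ∈ Vset q) :
    A t.1 * (conjChar B * D) t.2.1 * C t.2.2 * (starRingEnd ℂ) (D (1 - t.2.1)) *
        (starRingEnd ℂ) ((A * C * conjChar E) (1 - t.2.2))
      = (C (-1) * D (-1)) * (A (emap q t).1 * B (emap q t).2.1 * C (emap q t).2.2 *
          (starRingEnd ℂ) (D (1 - (emap q t).2.1)) *
          (starRingEnd ℂ) (E (1 - (emap q t).2.2))) := by
  obtain ⟨hx, hy, hz, h1x, h1y, h1z⟩ := units_of_mem h
  obtain ⟨x, y, z⟩ := t
  simp only at hx hy hz h1x h1y h1z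
  have hu : (1 - z) * (1 - z)⁻¹ = 1 := ZMod.mul_inv_of_unit _ h1z
  have hv : y * y⁻¹ = 1 := ZMod.mul_inv_of_unit _ hy
  simp only [emap, conjChar, MulChar.mul_apply, MulChar.ringHomComp_apply]
  rw [show (1 : ZMod q) - y⁻¹ = -1 * ((1 - y) * y⁻¹) from by linear_combination -hv]
  rw [show (1 : ZMod q) - -(z * (1 - z)⁻¹) = (1 - z)⁻¹ from by linear_combination -hu]
  rw [show -(z * (1 - z)⁻¹) = -1 * (z * (1 - z)⁻¹) from by ring]
  simp only [map_mul]
  rw [char_inv_apply A h1z, char_inv_apply B hy, char_inv_apply C h1z,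
    char_inv_apply D hy, char_inv_apply E h1z]
  simp only [Complex.conj_conj, conj_neg_one]
  rcases mul_self_eq_one_iff.mp (sq_neg_one C) with hC | hC <;>
    rcases mul_self_eq_one_iff.mp (sq_neg_one D) with hD | hD <;>
      rw [hC, hD] <;> ring

end Aux

theorem threeF₂_transform₄ (p α : ℕ) (hp : p.Prime) (hodd : Odd p) (hα : 1 ≤ α)
    (q : ℕ) (hq : q = p ^ α) [NeZero q] (A B C D E : DirichletCharacter ℂ q) :
    threeF₂ A B C D E 1 =
      (A * D) (-1) * threeF₂ A (conjChar B * D) C D (A * C * conjChar E) 1 := by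
  rw [repr₃ A B C D E, repr₃ A (conjChar B * D) C D (A * C * conjChar E)]
  have hsum : ∑ t ∈ Vset q, A t.1 * (conjChar B * D) t.2.1 * C t.2.2 *
        (starRingEnd ℂ) (D (1 - t.2.1)) * (starRingEnd ℂ) ((A * C * conjChar E) (1 - t.2.2))
      = ∑ t ∈ Vset q, (C (-1) * D (-1)) * (A t.1 * B t.2.1 * C t.2.2 *
          (starRingEnd ℂ) (D (1 - t.2.1)) * (starRingEnd ℂ) (E (1 - t.2.2))) :=
    Finset.sum_nbij' (emap q) (emap q) (fun t ht => emap_mem ht) (fun t ht => emap_mem ht)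
      (fun t ht => emap_invol ht) (fun t ht => emap_invol ht)
      (fun t ht => emap_term A B C D E ht)
  rw [hsum, ← Finset.mul_sum]
  simp only [MulChar.mul_apply, conjChar, MulChar.ringHomComp_apply, conj_neg_one]
  rcases mul_self_eq_one_iff.mp (sq_neg_one A) with hA | hA <;>
    rcases mul_self_eq_one_iff.mp (sq_neg_one C) with hC | hC <;>
      rcases mul_self_eq_one_iff.mp (sq_neg_one D) with hD | hD <;>
        rw [hA, hC, hD] <;> ring
end
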